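/- arXiv:2601.09308 — 2 statements merged into one kernel-verified Lean document; each statement's English description precedes it below -/
import Mathlib

section
/- Let ν be a finite measure on a measurable space (Ω, 𝒜) and let μ = ν.withDensity ρ be a finite measure with D(μ‖ν) < ∞. Let (F_n) be an increasing sequence of sub-σ-algebras of 𝒜 and let f_n be a conditional density of μ given F_n with respect to ν, so that μ_n := ν.withDensity f_n satisfies D(μ_n‖ν) = ∫ (f_n ln f_n − f_n + 1) dν. If D(μ_n‖ν) → D(μ‖ν) as n → ∞, then (f_n) is a Cauchy sequence in L¹(ν) and f_n converges in L¹(ν) to ρ; in particular ∫ g dμ = ∫ g·ρ dν for every bounded measurable g. -/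
open MeasureTheory Filter Topology ENNReal

open Classical in
/-- Information divergence `D(μ‖ν)`: if `μ ≪ ν` it is `∫ (ρ ln ρ − ρ + 1) dν` where
`ρ` is the density of `μ` with respect to `ν`, and `∞` otherwise. -/
noncomputable def infoDiv {Ω : Type*} [MeasurableSpace Ω] (μ ν : Measure Ω) : ℝ≥0∞ :=
  if μ ≪ ν then
    ∫⁻ x, ENNReal.ofReal ((μ.rnDeriv ν x).toReal * Real.log (μ.rnDeriv ν x).toReal
      - (μ.rnDeriv ν x).toReal + 1) ∂ν
  else ∞

noncomputable def phiR (x : ℝ) : ℝ := x * Real.log x - x + 1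


lemma phiR_nonneg {x : ℝ} (hx : 0 ≤ x) : 0 ≤ phiR x := by
  rcases eq_or_lt_of_le hx with h | h
  · simp [phiR, ← h]
  · have h1 : Real.log x⁻¹ ≤ x⁻¹ - 1 := Real.log_le_sub_one_of_pos (by positivity)
    rw [Real.log_inv] at h1
    have h2 : x * (-Real.log x) ≤ x * (x⁻¹ - 1) := mul_le_mul_of_nonneg_left h1 hx
    have hxi : x * x⁻¹ = 1 := mul_inv_cancel₀ h.ne'
    simp only [phiR]
    nlinarith [h2]

lemma bregman_ge {a b : ℝ} (ha : 0 ≤ a) (hb : 0 < b) :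
    (Real.sqrt a - Real.sqrt b) ^ 2 ≤ phiR a - phiR b - Real.log b * (a - b) := by
  rcases eq_or_lt_of_le ha with h | h
  · simp only [phiR, ← h]
    simp only [Real.sqrt_zero, Real.log_zero, zero_mul, zero_sub, neg_sq]
    nlinarith [Real.sq_sqrt hb.le]
  · have hlog : Real.log (Real.sqrt b / Real.sqrt a) ≤ Real.sqrt b / Real.sqrt a - 1 :=
      Real.log_le_sub_one_of_pos (by positivity)
    have hsa : Real.sqrt a ^ 2 = a := Real.sq_sqrt h.le
    have hsb : Real.sqrt b ^ 2 = b := Real.sq_sqrt hb.le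
    have hsa0 : 0 < Real.sqrt a := Real.sqrt_pos.2 h
    have hsb0 : 0 < Real.sqrt b := Real.sqrt_pos.2 hb
    have hld : Real.log (Real.sqrt b / Real.sqrt a) = (Real.log b - Real.log a) / 2 := by
      rw [Real.log_div hsb0.ne' hsa0.ne', Real.log_sqrt hb.le, Real.log_sqrt h.le]; ring
    rw [hld] at hlog
    have key : a * ((Real.log b - Real.log a) / 2) ≤ a * (Real.sqrt b / Real.sqrt a - 1) :=
      mul_le_mul_of_nonneg_left hlog h.le
    have h3 : a * (Real.sqrt b / Real.sqrt a) = Real.sqrt a * Real.sqrt b := by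
      rw [mul_div_assoc', div_eq_iff hsa0.ne']; linear_combination (-Real.sqrt b) * hsa
    simp only [phiR]
    nlinarith [key, h3]

-- b * (log b)⁺ ≤ phiR b + b
lemma mul_logpos_le {b : ℝ} (hb : 0 ≤ b) : b * max (Real.log b) 0 ≤ phiR b + b := by
  rcases le_or_gt b 1 with h | h
  · rcases eq_or_lt_of_le hb with h0 | h0
    · simp [← h0, phiR]
    · have : Real.log b ≤ 0 := Real.log_nonpos hb h
      rw [max_eq_right this]
      simpa using add_nonneg (phiR_nonneg hb) hb
  · have hl : 0 ≤ Real.log b := Real.log_nonneg h.le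
    rw [max_eq_left hl]
    simp only [phiR]; nlinarith

-- b * (log b)⁻ ≤ 1
lemma mul_logneg_le {b : ℝ} (hb : 0 ≤ b) : b * max (-Real.log b) 0 ≤ 1 := by
  rcases le_or_gt 1 b with h | h
  · have : Real.log b ≥ 0 := Real.log_nonneg h
    rw [max_eq_right (by linarith)]
    simp
  · rcases eq_or_lt_of_le hb with h0 | h0
    · simp [← h0]
    · have h1 : Real.log b⁻¹ ≤ b⁻¹ - 1 := Real.log_le_sub_one_of_pos (by positivity)
      rw [Real.log_inv] at h1
      have hxi : b * b⁻¹ = 1 := mul_inv_cancel₀ h0.ne'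
      rcases le_or_gt (-Real.log b) 0 with h2 | h2
      · rw [max_eq_right h2]; simp
      · rw [max_eq_left h2.le]
        nlinarith [mul_le_mul_of_nonneg_left h1 hb]

lemma phiR_measurable : Measurable phiR := by
  unfold phiR
  exact ((measurable_id.mul Real.measurable_log).sub measurable_id).add measurable_const

lemma ofReal_max0 (r : ℝ) : ENNReal.ofReal (max r 0) = ENNReal.ofReal r := by
  rcases le_total r 0 with h | h
  · rw [max_eq_right h, ENNReal.ofReal_zero, eq_comm, ENNReal.ofReal_eq_zero]; exact h
  · rw [max_eq_left h]

lemma integrable_of_ofReal {α : Type*} {mα : MeasurableSpace α} {μ : Measure α} {g : α → ℝ}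
    (hg : Measurable g) (h0 : 0 ≤ᵐ[μ] g) (h : ∫⁻ x, ENNReal.ofReal (g x) ∂μ ≠ ∞) :
    Integrable g μ :=
  ⟨hg.aestronglyMeasurable, (hasFiniteIntegral_iff_ofReal h0).2 h.lt_top⟩

lemma iSup_min_nat {m : ℝ≥0∞} (hm : m ≠ ∞) : ⨆ K : ℕ, min m (K : ℝ≥0∞) = m := by
  apply le_antisymm (iSup_le fun K => min_le_left _ _)
  obtain ⟨K, hK⟩ := ENNReal.exists_nat_gt hm
  calc m = min m (K : ℝ≥0∞) := (min_eq_left hK.le).symm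
  _ ≤ _ := le_iSup (fun K : ℕ => min m (K : ℝ≥0∞)) K

lemma key_bound {Ω : Type*} [mΩ : MeasurableSpace Ω] (ν : Measure Ω) [IsFiniteMeasure ν]
    (ρ : Ω → ℝ≥0∞) (hρ : Measurable ρ) (hρfin : ∫⁻ x, ρ x ∂ν ≠ ∞)
    (m : MeasurableSpace Ω) (hm : m ≤ mΩ) (g : Ω → ℝ≥0∞) (hgm : Measurable[m] g)
    (hg : ∀ A : Set Ω, MeasurableSet[m] A → ∫⁻ x in A, g x ∂ν = ∫⁻ x in A, ρ x ∂ν)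
    (hD : ∫⁻ x, ENNReal.ofReal (phiR (ρ x).toReal) ∂ν ≠ ∞)
    (hDg : ∫⁻ x, ENNReal.ofReal (phiR (g x).toReal) ∂ν ≠ ∞) :
    ∫⁻ x, ENNReal.ofReal |(ρ x).toReal - (g x).toReal| ∂ν ≤
      (ENNReal.ofReal ((∫⁻ x, ENNReal.ofReal (phiR (ρ x).toReal) ∂ν).toReal
        - (∫⁻ x, ENNReal.ofReal (phiR (g x).toReal) ∂ν).toReal)) ^ (1/2 : ℝ)
      * (4 * ∫⁻ x, ρ x ∂ν) ^ (1/2 : ℝ) := by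
  have hgM : Measurable[mΩ] g := hgm.mono hm le_rfl
  set a : Ω → ℝ := fun x => (ρ x).toReal with ha_def
  set bb : Ω → ℝ := fun x => (g x).toReal with hbb_def
  have haM : Measurable[mΩ] a := hρ.ennreal_toReal
  have hbM : Measurable[mΩ] bb := hgM.ennreal_toReal
  have htot : ∫⁻ x, g x ∂ν = ∫⁻ x, ρ x ∂ν := by
    simpa using hg Set.univ MeasurableSet.univ
  have hIa : Integrable a ν := integrable_toReal_of_lintegral_ne_top hρ.aemeasurable hρfin
  have hIb : Integrable bb ν := integrable_toReal_of_lintegral_ne_top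
    ((hgm.mono hm le_rfl).aemeasurable) (htot ▸ hρfin)
  have hgfin : ∫⁻ x, g x ∂ν ≠ ∞ := htot ▸ hρfin
  have haem : ∀ᵐ x ∂ν, ρ x ≠ ∞ := (ae_lt_top hρ hρfin).mono fun x h => h.ne
  have hbem : ∀ᵐ x ∂ν, g x ≠ ∞ := (ae_lt_top hgM hgfin).mono fun x h => h.ne
  -- on {g = 0}, ρ = 0 a.e.
  have hzero : ∀ᵐ x ∂ν, g x = 0 → ρ x = 0 := by
    have hA : MeasurableSet[m] (g ⁻¹' {0}) := hgm (measurableSet_singleton 0)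
    have h1 : ∫⁻ x in g ⁻¹' {0}, ρ x ∂ν = 0 := by
      rw [← hg _ hA]
      rw [setLIntegral_congr_fun (hm _ hA) (show Set.EqOn g (fun _ => 0) (g ⁻¹' {0}) from fun x hx => hx)]
      simp
    exact (setLIntegral_eq_zero_iff (hm _ hA) hρ).1 h1
  -- the conditional expectation property for lintegrals
  have htrim : ∀ h : Ω → ℝ≥0∞, Measurable[m] h →
      ∫⁻ x, h x * g x ∂ν = ∫⁻ x, h x * ρ x ∂ν := by
    intro h hh
    have hhM : Measurable[mΩ] h := hh.mono hm le_rfl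
    have e1 : (ν.withDensity g).trim hm = (ν.withDensity ρ).trim hm := by
      refine @Measure.ext Ω m _ _ fun s hs => ?_
      rw [trim_measurableSet_eq hm hs, trim_measurableSet_eq hm hs,
        withDensity_apply _ (hm s hs), withDensity_apply _ (hm s hs), hg s hs]
    have L1 : ∫⁻ x, h x ∂(ν.withDensity g) = ∫⁻ x, h x * g x ∂ν := by
      rw [lintegral_withDensity_eq_lintegral_mul ν hgM hhM]
      exact lintegral_congr fun x => mul_comm _ _
    have L2 : ∫⁻ x, h x ∂(ν.withDensity ρ) = ∫⁻ x, h x * ρ x ∂ν := by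
      rw [lintegral_withDensity_eq_lintegral_mul ν hρ hhM]
      exact lintegral_congr fun x => mul_comm _ _
    rw [← L1, ← L2, ← lintegral_trim hm hh, ← lintegral_trim hm hh, e1]
  have hbbm : Measurable[m] bb := hgm.ennreal_toReal
  -- positive part of log
  set P : Ω → ℝ≥0∞ := fun x => ENNReal.ofReal (Real.log (bb x)) with hP_def
  have hPm : Measurable[m] P :=
    ENNReal.measurable_ofReal.comp (Real.measurable_log.comp hbbm)
  have SP : ∫⁻ x, P x * g x ∂ν = ∫⁻ x, P x * ρ x ∂ν := htrim P hPm
  have hPg_le : ∀ᵐ x ∂ν, P x * g x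
      ≤ ENNReal.ofReal (phiR (bb x)) + ENNReal.ofReal (bb x) := by
    filter_upwards [hbem] with x hx
    rw [← ENNReal.ofReal_add (phiR_nonneg ENNReal.toReal_nonneg) ENNReal.toReal_nonneg]
    rcases le_or_gt (Real.log (bb x)) 0 with h | h
    · have : P x = 0 := ENNReal.ofReal_eq_zero.2 h
      rw [this, zero_mul]; exact zero_le
    · have hgx : g x = ENNReal.ofReal (bb x) := (ENNReal.ofReal_toReal hx).symm
      rw [hgx, hP_def, ← ENNReal.ofReal_mul h.le,
        ENNReal.toReal_ofReal ENNReal.toReal_nonneg]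
      apply ENNReal.ofReal_le_ofReal
      have h2 := mul_logpos_le (b := bb x) ENNReal.toReal_nonneg
      rw [max_eq_left h.le] at h2
      linarith
  have hfinPg : ∫⁻ x, P x * g x ∂ν ≠ ∞ := by
    refine ne_top_of_le_ne_top ?_ (lintegral_mono_ae hPg_le)
    have hφbMeas : Measurable[mΩ] fun x => ENNReal.ofReal (phiR (bb x)) :=
      ((phiR_measurable.comp hbM).ennreal_ofReal : _)
    rw [lintegral_add_left hφbMeas]
    exact ENNReal.add_ne_top.2 ⟨hDg,
      ne_top_of_le_ne_top hgfin (lintegral_mono fun x => ENNReal.ofReal_toReal_le)⟩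
  have hfinPρ : ∫⁻ x, P x * ρ x ∂ν ≠ ∞ := SP ▸ hfinPg
  -- negative part of log
  set M : Ω → ℝ≥0∞ := fun x => ENNReal.ofReal (-Real.log (bb x)) with hM_def
  have hMm : Measurable[m] M :=
    ENNReal.measurable_ofReal.comp ((Real.measurable_log.comp hbbm).neg)
  have hMM : Measurable[mΩ] M := hMm.mono hm le_rfl
  have hMconv : ∀ c : Ω → ℝ≥0∞, Measurable[mΩ] c →
      ∫⁻ x, M x * c x ∂ν = ⨆ K : ℕ, ∫⁻ x, min (M x) (K : ℝ≥0∞) * c x ∂ν := by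
    intro c hc
    calc ∫⁻ x, M x * c x ∂ν
        = ∫⁻ x, ⨆ K : ℕ, min (M x) (K : ℝ≥0∞) * c x ∂ν := by
          refine lintegral_congr fun x => ?_
          rw [← ENNReal.iSup_mul, iSup_min_nat ENNReal.ofReal_ne_top]
      _ = ⨆ K : ℕ, ∫⁻ x, min (M x) (K : ℝ≥0∞) * c x ∂ν := by
          refine lintegral_iSup (fun K => ((hMM.min measurable_const).mul hc)) ?_
          intro i j hij x
          exact mul_le_mul_left (min_le_min le_rfl (by exact_mod_cast Nat.cast_le.2 hij)) _
  have SM : ∫⁻ x, M x * g x ∂ν = ∫⁻ x, M x * ρ x ∂ν := by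
    rw [hMconv g hgM, hMconv ρ hρ]
    exact iSup_congr fun K => htrim _ (hMm.min measurable_const)
  have hMg_le : ∀ᵐ x ∂ν, M x * g x ≤ 1 := by
    filter_upwards [hbem] with x hx
    rcases le_or_gt (-Real.log (bb x)) 0 with h | h
    · have : M x = 0 := ENNReal.ofReal_eq_zero.2 h
      rw [this, zero_mul]; exact zero_le
    · have hgx : g x = ENNReal.ofReal (bb x) := (ENNReal.ofReal_toReal hx).symm
      rw [hgx, hM_def, ← ENNReal.ofReal_mul h.le, ← ENNReal.ofReal_one]
      apply ENNReal.ofReal_le_ofReal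
      have h2 := mul_logneg_le (b := bb x) ENNReal.toReal_nonneg
      rw [max_eq_left h.le] at h2
      linarith
  have hfinMg : ∫⁻ x, M x * g x ∂ν ≠ ∞ := by
    refine ne_top_of_le_ne_top ?_ (lintegral_mono_ae hMg_le)
    simp [lintegral_const, measure_ne_top]
  have hfinMρ : ∫⁻ x, M x * ρ x ∂ν ≠ ∞ := SM ▸ hfinMg
  -- conversion to real integrals
  have conv : ∀ (H : Ω → ℝ≥0∞) (h : Ω → ℝ), Measurable[mΩ] h → (∀ x, 0 ≤ h x) →
      (∀ᵐ x ∂ν, ENNReal.ofReal (h x) = H x) → (∫⁻ x, H x ∂ν ≠ ∞) →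
      Integrable h ν ∧ ∫ x, h x ∂ν = (∫⁻ x, H x ∂ν).toReal := by
    intro H h hhM hh0 hae hfin
    have h1 : ∫⁻ x, ENNReal.ofReal (h x) ∂ν = ∫⁻ x, H x ∂ν := lintegral_congr_ae hae
    have hint : Integrable h ν := integrable_of_ofReal hhM (ae_of_all _ hh0) (h1 ▸ hfin)
    refine ⟨hint, ?_⟩
    rw [integral_eq_lintegral_of_nonneg_ae (ae_of_all _ hh0) hhM.aestronglyMeasurable, h1]
  have hu1 := conv (fun x => P x * ρ x) (fun x => max (Real.log (bb x)) 0 * a x)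
    (by exact ((Real.measurable_log.comp hbM).max measurable_const).mul haM)
    (fun x => mul_nonneg (le_max_right _ _) ENNReal.toReal_nonneg)
    (by
      filter_upwards [haem] with x hx
      rw [ENNReal.ofReal_mul (le_max_right _ _), ofReal_max0, ENNReal.ofReal_toReal hx])
    hfinPρ
  have hu2 := conv (fun x => P x * g x) (fun x => max (Real.log (bb x)) 0 * bb x)
    (by exact ((Real.measurable_log.comp hbM).max measurable_const).mul hbM)
    (fun x => mul_nonneg (le_max_right _ _) ENNReal.toReal_nonneg)
    (by
      filter_upwards [hbem] with x hx
      rw [ENNReal.ofReal_mul (le_max_right _ _), ofReal_max0, ENNReal.ofReal_toReal hx])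
    hfinPg
  have hu3 := conv (fun x => M x * ρ x) (fun x => max (-Real.log (bb x)) 0 * a x)
    (by exact (((Real.measurable_log.comp hbM).neg).max measurable_const).mul haM)
    (fun x => mul_nonneg (le_max_right _ _) ENNReal.toReal_nonneg)
    (by
      filter_upwards [haem] with x hx
      rw [ENNReal.ofReal_mul (le_max_right _ _), ofReal_max0, ENNReal.ofReal_toReal hx])
    hfinMρ
  have hu4 := conv (fun x => M x * g x) (fun x => max (-Real.log (bb x)) 0 * bb x)
    (by exact (((Real.measurable_log.comp hbM).neg).max measurable_const).mul hbM)
    (fun x => mul_nonneg (le_max_right _ _) ENNReal.toReal_nonneg)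
    (by
      filter_upwards [hbem] with x hx
      rw [ENNReal.ofReal_mul (le_max_right _ _), ofReal_max0, ENNReal.ofReal_toReal hx])
    hfinMg
  -- the cross term vanishes
  have hfe : (fun x => Real.log (bb x) * (a x - bb x)) = fun x =>
      (max (Real.log (bb x)) 0 * a x - max (Real.log (bb x)) 0 * bb x)
      - (max (-Real.log (bb x)) 0 * a x - max (-Real.log (bb x)) 0 * bb x) := by
    funext x
    have : Real.log (bb x) = max (Real.log (bb x)) 0 - max (-Real.log (bb x)) 0 :=
      (max_zero_sub_max_neg_zero_eq_self _).symm
    conv_lhs => rw [this]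
    ring
  have hI12 : Integrable (fun x => max (Real.log (bb x)) 0 * a x
      - max (Real.log (bb x)) 0 * bb x) ν := by exact hu1.1.sub hu2.1
  have hI34 : Integrable (fun x => max (-Real.log (bb x)) 0 * a x
      - max (-Real.log (bb x)) 0 * bb x) ν := by exact hu3.1.sub hu4.1
  have hcross_int : Integrable (fun x => Real.log (bb x) * (a x - bb x)) ν := by
    rw [hfe]; exact by exact hI12.sub hI34
  have hcross : ∫ x, Real.log (bb x) * (a x - bb x) ∂ν = 0 := by
    rw [hfe, integral_sub hI12 hI34,
      integral_sub hu1.1 hu2.1, integral_sub hu3.1 hu4.1, hu1.2, hu2.2, hu3.2, hu4.2, SP, SM]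
    ring
  -- phi integrals
  have hIφa : Integrable (fun x => phiR (a x)) ν :=
    integrable_of_ofReal (phiR_measurable.comp haM)
      (ae_of_all _ fun x => phiR_nonneg ENNReal.toReal_nonneg) hD
  have hIφb : Integrable (fun x => phiR (bb x)) ν :=
    integrable_of_ofReal (phiR_measurable.comp hbM)
      (ae_of_all _ fun x => phiR_nonneg ENNReal.toReal_nonneg) hDg
  have hEφa : ∫ x, phiR (a x) ∂ν = (∫⁻ x, ENNReal.ofReal (phiR (a x)) ∂ν).toReal := by
    rw [integral_eq_lintegral_of_nonneg_ae
      (ae_of_all _ fun x => phiR_nonneg ENNReal.toReal_nonneg)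
      (phiR_measurable.comp haM).aestronglyMeasurable]
  have hEφb : ∫ x, phiR (bb x) ∂ν = (∫⁻ x, ENNReal.ofReal (phiR (bb x)) ∂ν).toReal := by
    rw [integral_eq_lintegral_of_nonneg_ae
      (ae_of_all _ fun x => phiR_nonneg ENNReal.toReal_nonneg)
      (phiR_measurable.comp hbM).aestronglyMeasurable]
  -- the Bregman-type function
  set B : Ω → ℝ := fun x => phiR (a x) - phiR (bb x) - Real.log (bb x) * (a x - bb x)
    with hB_def
  have hIB : Integrable B ν := by
    rw [hB_def]; exact ((hIφa.sub hIφb).sub hcross_int : _)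
  have hEB : ∫ x, B x ∂ν = (∫⁻ x, ENNReal.ofReal (phiR (a x)) ∂ν).toReal
      - (∫⁻ x, ENNReal.ofReal (phiR (bb x)) ∂ν).toReal := by
    have hIφab : Integrable (fun x => phiR (a x) - phiR (bb x)) ν := by
      exact hIφa.sub hIφb
    rw [hB_def]
    rw [integral_sub hIφab hcross_int, integral_sub hIφa hIφb, hcross, hEφa, hEφb]
    ring
  -- pointwise Bregman lower bound by square of sqrt difference
  set sd : Ω → ℝ := fun x => Real.sqrt (a x) - Real.sqrt (bb x) with hs_def
  have hsM : Measurable[mΩ] sd :=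
    (Real.continuous_sqrt.measurable.comp haM).sub (Real.continuous_sqrt.measurable.comp hbM)
  have hs2B : ∀ᵐ x ∂ν, sd x ^ 2 ≤ B x := by
    filter_upwards [hbem, hzero] with x hb hz
    rcases eq_or_lt_of_le (ENNReal.toReal_nonneg : 0 ≤ bb x) with h0 | h0
    · have hg0 : g x = 0 := by
        rcases (ENNReal.toReal_eq_zero_iff (g x)).1 h0.symm with h | h
        exacts [h, absurd h hb]
      have hax : a x = 0 := by simp [ha_def, hz hg0]
      have hbx : bb x = 0 := h0.symm
      simp [hs_def, hB_def, hax, hbx, phiR]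
    · exact bregman_ge ENNReal.toReal_nonneg h0
  have hIs2 : Integrable (fun x => sd x ^ 2) ν := by
    refine Integrable.mono' (by exact (hIa.const_mul 2).add (hIb.const_mul 2))
      (by exact (hsM.pow_const 2).aestronglyMeasurable) (ae_of_all _ fun x => ?_)
    have h1 : Real.sqrt (a x) ^ 2 = a x := Real.sq_sqrt ENNReal.toReal_nonneg
    have h2 : Real.sqrt (bb x) ^ 2 = bb x := Real.sq_sqrt ENNReal.toReal_nonneg
    rw [Real.norm_eq_abs, abs_of_nonneg (sq_nonneg _)]
    simp only [hs_def, Pi.add_apply]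
    nlinarith [h1, h2, sq_nonneg (Real.sqrt (a x) + Real.sqrt (bb x))]
  have hs2_le : ∫ x, sd x ^ 2 ∂ν ≤ (∫⁻ x, ENNReal.ofReal (phiR (a x)) ∂ν).toReal
      - (∫⁻ x, ENNReal.ofReal (phiR (bb x)) ∂ν).toReal :=
    hEB ▸ integral_mono_ae hIs2 hIB hs2B
  -- Cauchy-Schwarz
  have hpq : (2:ℝ).HolderConjugate 2 := Real.HolderConjugate.two_two
  have hprod : ∀ x, ENNReal.ofReal |a x - bb x|
      = ENNReal.ofReal |sd x| * ENNReal.ofReal (Real.sqrt (a x) + Real.sqrt (bb x)) := by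
    intro x
    rw [← ENNReal.ofReal_mul (abs_nonneg _)]
    congr 1
    have h1 : Real.sqrt (a x) ^ 2 = a x := Real.sq_sqrt ENNReal.toReal_nonneg
    have h2 : Real.sqrt (bb x) ^ 2 = bb x := Real.sq_sqrt ENNReal.toReal_nonneg
    have h3 : a x - bb x = sd x * (Real.sqrt (a x) + Real.sqrt (bb x)) := by
      simp only [hs_def]; nlinarith
    rw [h3, abs_mul, abs_of_nonneg (add_nonneg (Real.sqrt_nonneg _) (Real.sqrt_nonneg _))]
  have A1 : ∫⁻ x, ENNReal.ofReal |sd x| ^ (2:ℝ) ∂ν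
      ≤ ENNReal.ofReal ((∫⁻ x, ENNReal.ofReal (phiR (a x)) ∂ν).toReal
        - (∫⁻ x, ENNReal.ofReal (phiR (bb x)) ∂ν).toReal) := by
    have e : ∀ x, ENNReal.ofReal |sd x| ^ (2:ℝ) = ENNReal.ofReal (sd x ^ 2) := by
      intro x
      rw [ENNReal.ofReal_rpow_of_nonneg (abs_nonneg _) (by norm_num : (0:ℝ) ≤ 2)]
      congr 1
      rw [show (2:ℝ) = ((2:ℕ):ℝ) by norm_num, Real.rpow_natCast, sq_abs]
    rw [lintegral_congr e, ← ofReal_integral_eq_lintegral_ofReal hIs2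
      (ae_of_all _ fun x => sq_nonneg _)]
    exact ENNReal.ofReal_le_ofReal hs2_le
  have A2 : ∫⁻ x, ENNReal.ofReal (Real.sqrt (a x) + Real.sqrt (bb x)) ^ (2:ℝ) ∂ν
      ≤ 4 * ∫⁻ x, ρ x ∂ν := by
    have e2 : ∀ᵐ x ∂ν, ENNReal.ofReal (Real.sqrt (a x) + Real.sqrt (bb x)) ^ (2:ℝ)
        ≤ 2 * ρ x + 2 * g x := by
      filter_upwards [haem, hbem] with x hxa hxb
      rw [ENNReal.ofReal_rpow_of_nonneg
        (add_nonneg (Real.sqrt_nonneg _) (Real.sqrt_nonneg _)) (by norm_num : (0:ℝ) ≤ 2),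
        show (2:ℝ) = ((2:ℕ):ℝ) by norm_num, Real.rpow_natCast]
      have h1 : Real.sqrt (a x) ^ 2 = a x := Real.sq_sqrt ENNReal.toReal_nonneg
      have h2 : Real.sqrt (bb x) ^ 2 = bb x := Real.sq_sqrt ENNReal.toReal_nonneg
      calc ENNReal.ofReal ((Real.sqrt (a x) + Real.sqrt (bb x)) ^ 2)
          ≤ ENNReal.ofReal (2 * a x + 2 * bb x) :=
            ENNReal.ofReal_le_ofReal (by nlinarith [h1, h2, sq_nonneg (Real.sqrt (a x) - Real.sqrt (bb x))])
        _ = 2 * ρ x + 2 * g x := by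
            rw [ENNReal.ofReal_add (by positivity) (by positivity),
              ENNReal.ofReal_mul (by norm_num), ENNReal.ofReal_mul (by norm_num),
              ENNReal.ofReal_ofNat, ENNReal.ofReal_toReal hxa, ENNReal.ofReal_toReal hxb]
    calc ∫⁻ x, ENNReal.ofReal (Real.sqrt (a x) + Real.sqrt (bb x)) ^ (2:ℝ) ∂ν
        ≤ ∫⁻ x, (2 * ρ x + 2 * g x) ∂ν := lintegral_mono_ae e2
      _ = 2 * ∫⁻ x, ρ x ∂ν + 2 * ∫⁻ x, g x ∂ν := by
          rw [lintegral_add_left (hρ.const_mul 2), lintegral_const_mul 2 hρ,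
            lintegral_const_mul 2 hgM]
      _ = 4 * ∫⁻ x, ρ x ∂ν := by rw [htot]; ring
  calc ∫⁻ x, ENNReal.ofReal |a x - bb x| ∂ν
      = ∫⁻ x, ENNReal.ofReal |sd x| * ENNReal.ofReal (Real.sqrt (a x) + Real.sqrt (bb x)) ∂ν :=
        lintegral_congr hprod
    _ ≤ (∫⁻ x, ENNReal.ofReal |sd x| ^ (2:ℝ) ∂ν) ^ (1/2:ℝ)
        * (∫⁻ x, ENNReal.ofReal (Real.sqrt (a x) + Real.sqrt (bb x)) ^ (2:ℝ) ∂ν) ^ (1/2:ℝ) := by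
        have hf1m : Measurable[mΩ] fun x => ENNReal.ofReal |sd x| :=
          by exact (continuous_abs.measurable.comp hsM).ennreal_ofReal
        have hg1m : Measurable[mΩ] fun x => ENNReal.ofReal
            (Real.sqrt (a x) + Real.sqrt (bb x)) :=
          by exact ((Real.continuous_sqrt.measurable.comp haM).add
            (Real.continuous_sqrt.measurable.comp hbM)).ennreal_ofReal
        have hf1 : AEMeasurable (fun x => ENNReal.ofReal |sd x|) ν := ⟨_, hf1m, Filter.EventuallyEq.rfl⟩
        have hg1 : AEMeasurable (fun x => ENNReal.ofReal
            (Real.sqrt (a x) + Real.sqrt (bb x))) ν := ⟨_, hg1m, Filter.EventuallyEq.rfl⟩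
        exact @ENNReal.lintegral_mul_le_Lp_mul_Lq Ω mΩ ν _ _ hpq _ _ hf1 hg1
    _ ≤ (ENNReal.ofReal ((∫⁻ x, ENNReal.ofReal (phiR (a x)) ∂ν).toReal
          - (∫⁻ x, ENNReal.ofReal (phiR (bb x)) ∂ν).toReal)) ^ (1/2:ℝ)
        * (4 * ∫⁻ x, ρ x ∂ν) ^ (1/2:ℝ) :=
        mul_le_mul' (ENNReal.rpow_le_rpow A1 (by norm_num))
          (ENNReal.rpow_le_rpow A2 (by norm_num))

lemma tsub_abs_eq (u v : ℝ≥0∞) (hu : u ≠ ∞) (hv : v ≠ ∞) :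
    (u - v) + (v - u) = ENNReal.ofReal |v.toReal - u.toReal| := by
  rcases le_total u v with h | h
  · rw [tsub_eq_zero_of_le h, zero_add,
      abs_of_nonneg (sub_nonneg.2 ((ENNReal.toReal_le_toReal hu hv).2 h)),
      ← ENNReal.toReal_sub_of_le h hv,
      ENNReal.ofReal_toReal (ne_top_of_le_ne_top hv tsub_le_self)]
  · rw [tsub_eq_zero_of_le h, add_zero,
      abs_of_nonpos (sub_nonpos.2 ((ENNReal.toReal_le_toReal hv hu).2 h)), neg_sub,
      ← ENNReal.toReal_sub_of_le h hu,
      ENNReal.ofReal_toReal (ne_top_of_le_ne_top hu tsub_le_self)]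


/-- If `fₙ` are conditional densities of `μ = ν.withDensity ρ` given an increasing
sequence of sub-σ-algebras `Fₙ` and `D(ν.withDensity fₙ‖ν) → D(μ‖ν) < ∞`, then `fₙ`
is Cauchy in `L¹(ν)`, converges in `L¹(ν)` to `ρ`, and in particular
`∫ g dμ = ∫ g·ρ dν` for every bounded measurable `g`.
(The `L¹` distance of `ℝ≥0∞`-valued functions `f, g` is `∫⁻ ((f - g) + (g - f)) dν`
with truncated subtraction.) -/
theorem conditional_densities_cauchy_and_L1_convergence
    {Ω : Type*} [mΩ : MeasurableSpace Ω] (ν : Measure Ω) [IsFiniteMeasure ν]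
    (ρ : Ω → ℝ≥0∞) (hρ : Measurable ρ)
    (μ : Measure Ω) (hμ : μ = ν.withDensity ρ) [IsFiniteMeasure μ]
    (hfin : infoDiv μ ν < ∞)
    (F : ℕ → MeasurableSpace Ω) (hFmono : Monotone F) (hFle : ∀ n, F n ≤ mΩ)
    (f : ℕ → Ω → ℝ≥0∞) (hfmeas : ∀ n, Measurable[F n] (f n))
    (hf : ∀ n, ∀ A : Set Ω, MeasurableSet[F n] A → ∫⁻ x in A, f n x ∂ν = μ A)
    (hconv : Tendsto (fun n => @infoDiv Ω mΩ (ν.withDensity (f n)) ν) atTop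
      (𝓝 (@infoDiv Ω mΩ μ ν))) :
    (∀ ε : ℝ≥0∞, 0 < ε → ∃ N : ℕ, ∀ p ≥ N, ∀ q ≥ N,
        ∫⁻ x, ((f p x - f q x) + (f q x - f p x)) ∂ν < ε) ∧
    Tendsto (fun n => ∫⁻ x, ((f n x - ρ x) + (ρ x - f n x)) ∂ν) atTop (𝓝 0) ∧
    (∀ g : Ω → ℝ, Measurable g → (∃ C : ℝ, ∀ x, |g x| ≤ C) →
        ∫ x, g x ∂μ = ∫ x, g x * (ρ x).toReal ∂ν) := by
  subst hμ
  have hfm : ∀ n, Measurable[mΩ] (f n) := fun n => (hfmeas n).mono (hFle n) le_rfl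
  have hρfin : ∫⁻ x, ρ x ∂ν ≠ ∞ := by
    rw [← setLIntegral_univ, ← withDensity_apply ρ MeasurableSet.univ]
    exact measure_ne_top _ _
  have habs : ν.withDensity ρ ≪ ν := withDensity_absolutelyContinuous ν ρ
  have hD : infoDiv (ν.withDensity ρ) ν = ∫⁻ x, ENNReal.ofReal (phiR (ρ x).toReal) ∂ν := by
    rw [infoDiv, if_pos habs]
    refine lintegral_congr_ae ?_
    filter_upwards [Measure.rnDeriv_withDensity ν hρ] with x hx
    rw [hx]; rfl
  have hDn : ∀ n, infoDiv (ν.withDensity (f n)) ν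
      = ∫⁻ x, ENNReal.ofReal (phiR (f n x).toReal) ∂ν := by
    intro n
    rw [infoDiv, if_pos (withDensity_absolutelyContinuous ν (f n))]
    refine lintegral_congr_ae ?_
    filter_upwards [Measure.rnDeriv_withDensity ν (hfm n)] with x hx
    rw [hx]; rfl
  set D : ℝ≥0∞ := ∫⁻ x, ENNReal.ofReal (phiR (ρ x).toReal) ∂ν with hD_def
  set Dn : ℕ → ℝ≥0∞ := fun n => ∫⁻ x, ENNReal.ofReal (phiR (f n x).toReal) ∂ν with hDn_def
  have hfinD : D ≠ ∞ := by rw [← hD]; exact hfin.ne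
  have hconv' : Tendsto Dn atTop (𝓝 D) := by
    refine Tendsto.congr (fun n => hDn n) ?_
    rw [← hD]; exact hconv
  have hg : ∀ n, ∀ A : Set Ω, MeasurableSet[F n] A →
      ∫⁻ x in A, f n x ∂ν = ∫⁻ x in A, ρ x ∂ν := by
    intro n A hA
    rw [hf n A hA, withDensity_apply ρ (hFle n A hA)]
  have hftot : ∀ n, ∫⁻ x, f n x ∂ν = ∫⁻ x, ρ x ∂ν := by
    intro n
    have := hg n Set.univ MeasurableSet.univ
    simpa using this
  have hfae : ∀ n, ∀ᵐ x ∂ν, f n x ≠ ∞ := fun n =>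
    (ae_lt_top (hfm n) ((hftot n).symm ▸ hρfin)).mono fun x h => h.ne
  have hρae : ∀ᵐ x ∂ν, ρ x ≠ ∞ := (ae_lt_top hρ hρfin).mono fun x h => h.ne
  have hIeq : ∀ n, ∫⁻ x, ((f n x - ρ x) + (ρ x - f n x)) ∂ν
      = ∫⁻ x, ENNReal.ofReal |(ρ x).toReal - (f n x).toReal| ∂ν := by
    intro n
    refine lintegral_congr_ae ?_
    filter_upwards [hfae n, hρae] with x hfx hρx
    exact tsub_abs_eq _ _ hfx hρx
  have key : ∀ n, Dn n ≠ ∞ →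
      ∫⁻ x, ENNReal.ofReal |(ρ x).toReal - (f n x).toReal| ∂ν
        ≤ (ENNReal.ofReal (D.toReal - (Dn n).toReal)) ^ (1/2:ℝ)
          * (4 * ∫⁻ x, ρ x ∂ν) ^ (1/2:ℝ) := fun n hn =>
    key_bound ν ρ hρ hρfin (F n) (hFle n) (f n) (hfmeas n) (hg n) hfinD hn
  have hbound0 : Tendsto (fun n => (ENNReal.ofReal (D.toReal - (Dn n).toReal)) ^ (1/2:ℝ)
      * (4 * ∫⁻ x, ρ x ∂ν) ^ (1/2:ℝ)) atTop (𝓝 0) := by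
    have h1 : Tendsto (fun n => D.toReal - (Dn n).toReal) atTop (𝓝 0) := by
      have h0 := (ENNReal.tendsto_toReal hfinD).comp hconv'
      have := (tendsto_const_nhds (x := D.toReal) (f := atTop)).sub h0
      simpa using this
    have h2 : Tendsto (fun n => ENNReal.ofReal (D.toReal - (Dn n).toReal)) atTop (𝓝 0) := by
      have := ENNReal.tendsto_ofReal h1
      simpa using this
    have h3 := h2.ennrpow_const (1/2:ℝ)
    rw [ENNReal.zero_rpow_of_pos (by norm_num)] at h3
    have h4 : ((4:ℝ≥0∞) * ∫⁻ x, ρ x ∂ν) ^ (1/2:ℝ) ≠ ∞ :=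
      ENNReal.rpow_ne_top_of_nonneg (by norm_num)
        (ENNReal.mul_ne_top (by norm_num) hρfin)
    have := ENNReal.Tendsto.mul_const h3 (Or.inr h4)
    simpa using this
  have part2 : Tendsto (fun n => ∫⁻ x, ((f n x - ρ x) + (ρ x - f n x)) ∂ν) atTop (𝓝 0) := by
    refine tendsto_of_tendsto_of_tendsto_of_le_of_le' tendsto_const_nhds hbound0
      (Eventually.of_forall fun n => zero_le) ?_
    have hev : ∀ᶠ n in atTop, Dn n < D + 1 :=
      hconv'.eventually_lt_const (ENNReal.lt_add_right hfinD one_ne_zero)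
    filter_upwards [hev] with n hn
    rw [hIeq n]
    exact key n (hn.trans_le le_top).ne_top |>.trans le_rfl
  refine ⟨?_, part2, ?_⟩
  · intro ε hε
    have hev : ∀ᶠ n in atTop, ∫⁻ x, ((f n x - ρ x) + (ρ x - f n x)) ∂ν < ε / 2 :=
      part2.eventually_lt_const (ENNReal.half_pos hε.ne')
    obtain ⟨N, hN⟩ := eventually_atTop.1 hev
    refine ⟨N, fun p hp q hq => ?_⟩
    have hptw : ∀ x, (f p x - f q x) + (f q x - f p x)
        ≤ ((f p x - ρ x) + (ρ x - f p x)) + ((f q x - ρ x) + (ρ x - f q x)) := by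
      intro x
      have h1 : f p x - f q x ≤ (f p x - ρ x) + (ρ x - f q x) := tsub_le_tsub_add_tsub
      have h2 : f q x - f p x ≤ (f q x - ρ x) + (ρ x - f p x) := tsub_le_tsub_add_tsub
      calc (f p x - f q x) + (f q x - f p x)
          ≤ ((f p x - ρ x) + (ρ x - f q x)) + ((f q x - ρ x) + (ρ x - f p x)) :=
            add_le_add h1 h2
        _ = ((f p x - ρ x) + (ρ x - f p x)) + ((f q x - ρ x) + (ρ x - f q x)) := by ring
    have hmp : Measurable[mΩ] fun x => (f p x - ρ x) + (ρ x - f p x) := by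
      exact ((hfm p).sub hρ).add (hρ.sub (hfm p))
    calc ∫⁻ x, ((f p x - f q x) + (f q x - f p x)) ∂ν
        ≤ ∫⁻ x, (((f p x - ρ x) + (ρ x - f p x)) + ((f q x - ρ x) + (ρ x - f q x))) ∂ν :=
          lintegral_mono hptw
      _ = (∫⁻ x, ((f p x - ρ x) + (ρ x - f p x)) ∂ν)
          + ∫⁻ x, ((f q x - ρ x) + (ρ x - f q x)) ∂ν := lintegral_add_left hmp _
      _ < ε / 2 + ε / 2 := ENNReal.add_lt_add (hN p hp) (hN q hq)
      _ = ε := ENNReal.add_halves ε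
  · intro g hgmeas _
    have hwd : ν.withDensity ρ = ν.withDensity (fun x => ((ρ x).toNNReal : ℝ≥0∞)) :=
      withDensity_congr_ae (hρae.mono fun x hx => (ENNReal.coe_toNNReal hx).symm)
    rw [hwd, integral_withDensity_eq_integral_smul (by exact hρ.ennreal_toNNReal) g]
    refine integral_congr_ae (ae_of_all _ fun x => ?_)
    show ((ρ x).toNNReal : ℝ) * g x = g x * (ρ x).toReal
    rw [mul_comm]
    rfl
end

section
/- Let Q be a probability measure and let (X_1, F_1), (X_2, F_2), …, (X_n, F_n) be a non-negative martingale with respect to Q with E[X_n] = 1. For 1 ≤ m ≤ n set X_{m,n}^max := max_{m ≤ j ≤ n} X_j and X_{m,n}^min := min_{m ≤ j ≤ n} X_j, and let P_j := Q.withDensity X_j. Then γ(E[X_{m,n}^max]) ≤ D(P_n‖P_m) and γ(E[X_{m,n}^min]) ≤ D(P_n‖P_m), where γ(x) = x − 1 − ln x. -/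
open MeasureTheory Filter Topology ENNReal

/-- The function `γ(x) = x − 1 − ln x`. -/
noncomputable def gammaFn (x : ℝ) : ℝ := x - 1 - Real.log x

section MDBaux

variable {Ω : Type*} [mΩ : MeasurableSpace Ω] {Q : Measure Ω} [IsProbabilityMeasure Q]
  {ℱ : Filtration ℕ mΩ} {X : ℕ → Ω → ℝ}

lemma mdb_absorb (hmart : Martingale X ℱ Q) (hnonneg : ∀ j ω, 0 ≤ X j ω)
    {i j : ℕ} (hij : i ≤ j) : ∀ᵐ ω ∂Q, X i ω = 0 → X j ω = 0 := by
  set s : Set Ω := {ω | X i ω ≤ 0} with hs_def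
  have hs : MeasurableSet[ℱ i] s := (hmart.stronglyAdapted i).measurable measurableSet_Iic
  have hsm : MeasurableSet s := ℱ.le i s hs
  have h1 : ∫ ω in s, X i ω ∂Q = ∫ ω in s, X j ω ∂Q := hmart.setIntegral_eq hij hs
  have h2 : ∫ ω in s, X i ω ∂Q = 0 := by
    rw [setIntegral_eq_zero_iff_of_nonneg_ae (Eventually.of_forall fun ω => hnonneg i ω)
      (hmart.integrable i).integrableOn]
    filter_upwards [ae_restrict_mem hsm] with ω hω
    exact le_antisymm hω (hnonneg i ω)
  have h3 : X j =ᵐ[Q.restrict s] 0 := by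
    rw [← setIntegral_eq_zero_iff_of_nonneg_ae (Eventually.of_forall fun ω => hnonneg j ω)
      (hmart.integrable j).integrableOn]
    rw [← h1]; exact h2
  have h4 := (ae_restrict_iff' hsm).mp h3
  filter_upwards [h4] with ω hω hωi
  exact hω (by simp [hs_def, hωi.le])

lemma mdb_stop (hmart : Martingale X ℱ Q) {m n : ℕ} (hmn : m ≤ n) (c : ℝ) {s : Set ℝ}
    (hs : MeasurableSet s) :
    MeasurableSet {ω | ∃ j ∈ Set.Icc m n, X j ω - c * X m ω ∈ s} ∧
    ∃ τ : Ω → ℕ,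
      (∀ ω ∈ {ω | ∃ j ∈ Set.Icc m n, X j ω - c * X m ω ∈ s}, X (τ ω) ω - c * X m ω ∈ s) ∧
      Integrable (fun ω => X (τ ω) ω) Q ∧
      ∫ ω in {ω | ∃ j ∈ Set.Icc m n, X j ω - c * X m ω ∈ s}, X (τ ω) ω ∂Q
        = ∫ ω in {ω | ∃ j ∈ Set.Icc m n, X j ω - c * X m ω ∈ s}, X n ω ∂Q := by
  classical
  set g : ℕ → Ω → ℝ := fun j ω => if m ≤ j then X j ω - c * X m ω else 0 with hg_def
  set A : Set Ω := {ω | ∃ j ∈ Set.Icc m n, X j ω - c * X m ω ∈ s} with hA_def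
  have hXmeas : ∀ j : ℕ, Measurable (X j) := fun j =>
    ((hmart.stronglyAdapted j).mono (ℱ.le j)).measurable
  have hAmeas : MeasurableSet A := by
    have : A = ⋃ j ∈ Set.Icc m n, {ω | X j ω - c * X m ω ∈ s} := by
      ext ω; simp [hA_def]
    rw [this]
    exact MeasurableSet.biUnion (Set.to_countable _) fun j _ =>
      ((hXmeas j).sub ((hXmeas m).const_mul c)) hs
  have hg_adapted : Adapted ℱ g := by
    intro j
    by_cases hj : m ≤ j
    · have : g j = fun ω => X j ω - c * X m ω := by
        funext ω; simp [hg_def, hj]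
      rw [this]
      exact ((hmart.stronglyAdapted j).sub (((hmart.stronglyAdapted m).mono (ℱ.mono hj)).const_mul c)).measurable
    · have : g j = fun _ => (0 : ℝ) := by funext ω; simp [hg_def, hj]
      rw [this]; exact measurable_const
  set τ : Ω → ℕ := hittingBtwn g s m n with hτ_def
  set τ' : Ω → WithTop ℕ := fun ω => (τ ω : WithTop ℕ) with hτ'_def
  have hτ : IsStoppingTime ℱ τ' := hg_adapted.isStoppingTime_hittingBtwn hs
  have hτ_le : ∀ ω, τ ω ≤ n := fun ω => hittingBtwn_le ω
  have hτ'_le : ∀ ω, τ' ω ≤ n := fun ω => WithTop.coe_le_coe.mpr (hτ_le ω)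
  have hsvτ : stoppedValue X τ' = fun ω => X (τ ω) ω := rfl
  have hτ_ge : ∀ ω, m ≤ τ ω := fun ω => le_hittingBtwn hmn ω
  have hA_eq : ∀ ω, ω ∈ A ↔ ∃ j ∈ Set.Icc m n, g j ω ∈ s := by
    intro ω
    constructor
    · rintro ⟨j, hj, hjs⟩; exact ⟨j, hj, by simpa [hg_def, hj.1] using hjs⟩
    · rintro ⟨j, hj, hjs⟩; exact ⟨j, hj, by simpa [hg_def, hj.1] using hjs⟩
  have hmem : ∀ ω ∈ A, X (τ ω) ω - c * X m ω ∈ s := by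
    intro ω hω
    have h' : g (τ ω) ω ∈ s := hittingBtwn_mem_set ((hA_eq ω).mp hω)
    simpa [hg_def, hτ_ge ω] using h'
  have hsv_int : Integrable (stoppedValue X τ') Q :=
    integrable_stoppedValue ℕ hτ hmart.integrable hτ'_le
  have hE : ∫ ω, stoppedValue X τ' ω ∂Q = ∫ ω, X n ω ∂Q := by
    have h1 := hmart.submartingale.expected_stoppedValue_mono hτ
      (isStoppingTime_const ℱ n) hτ'_le (fun ω => le_refl _)
    have h2 := hmart.neg.submartingale.expected_stoppedValue_mono hτ
      (isStoppingTime_const ℱ n) hτ'_le (fun ω => le_refl _)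
    rw [stoppedValue_const] at h1
    rw [stoppedValue_const] at h2
    have hneg : stoppedValue (-X) τ' = -stoppedValue X τ' := by
      funext ω; simp [stoppedValue]
    rw [hneg] at h2
    simp only [integral_neg, Pi.neg_apply, neg_le_neg_iff] at h2
    have h2' : ∫ ω, X n ω ∂Q ≤ ∫ ω, stoppedValue X τ' ω ∂Q := by
      simpa using h2
    exact le_antisymm h1 h2'
  have hoffA : ∀ ω ∉ A, stoppedValue X τ' ω = X n ω := by
    intro ω hω
    have : τ ω = n := by
      rw [hτ_def, hittingBtwn]
      exact if_neg (fun h => hω ((hA_eq ω).mpr h))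
    simp [hsvτ, this]
  refine ⟨hAmeas, τ, hmem, by simpa [hsvτ] using hsv_int, ?_⟩
  have e1 : ∫ ω in A, stoppedValue X τ' ω ∂Q + ∫ ω in Aᶜ, stoppedValue X τ' ω ∂Q
      = ∫ ω, stoppedValue X τ' ω ∂Q := integral_add_compl hAmeas hsv_int
  have e2 : ∫ ω in A, X n ω ∂Q + ∫ ω in Aᶜ, X n ω ∂Q = ∫ ω, X n ω ∂Q :=
    integral_add_compl hAmeas (hmart.integrable n)
  have e3 : ∫ ω in Aᶜ, stoppedValue X τ' ω ∂Q = ∫ ω in Aᶜ, X n ω ∂Q :=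
    setIntegral_congr_fun hAmeas.compl (fun ω hω => hoffA ω hω)
  have : ∫ ω in A, stoppedValue X τ' ω ∂Q = ∫ ω in A, X n ω ∂Q := by linarith [e1, e2, e3, hE]
  simpa [hsvτ] using this

lemma mdb_psi_nonneg {x : ℝ} (hx : 0 ≤ x) : 0 ≤ x * Real.log x - x + 1 := by
  rcases eq_or_lt_of_le hx with h | h
  · simp [← h]
  · have h1 : Real.log x⁻¹ ≤ x⁻¹ - 1 := Real.log_le_sub_one_of_pos (by positivity)
    rw [Real.log_inv] at h1
    have h2 : 1 - x⁻¹ ≤ Real.log x := by linarith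
    have h3 : x * (1 - x⁻¹) ≤ x * Real.log x := by
      exact mul_le_mul_of_nonneg_left h2 hx
    have h4 : x * (1 - x⁻¹) = x - 1 := by field_simp
    linarith

lemma mdb_setint (hmart : Martingale X ℱ Q) (hnonneg : ∀ j ω, 0 ≤ X j ω) (k : ℕ)
    {A : Set Ω} (hA : MeasurableSet A) :
    (Q.withDensity fun ω => ENNReal.ofReal (X k ω)) A = ENNReal.ofReal (∫ ω in A, X k ω ∂Q) := by
  rw [withDensity_apply _ hA,
    ofReal_integral_eq_lintegral_ofReal (hmart.integrable k).integrableOn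
      (Eventually.of_forall fun ω => hnonneg k ω)]

lemma mdb_doob_max (hmart : Martingale X ℱ Q) (hnonneg : ∀ j ω, 0 ≤ X j ω)
    {m n : ℕ} (hmn : m ≤ n) {c : ℝ} (hc : 0 ≤ c) :
    ENNReal.ofReal c *
      (Q.withDensity fun ω => ENNReal.ofReal (X m ω))
        {ω | ∃ j ∈ Set.Icc m n, X j ω - c * X m ω ∈ Set.Ioi 0}
      ≤ (Q.withDensity fun ω => ENNReal.ofReal (X n ω))
        {ω | ∃ j ∈ Set.Icc m n, X j ω - c * X m ω ∈ Set.Ioi 0} := by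
  obtain ⟨hAmeas, τ, hmem, hint, heq⟩ := mdb_stop hmart hmn c measurableSet_Ioi
  set A := {ω | ∃ j ∈ Set.Icc m n, X j ω - c * X m ω ∈ Set.Ioi 0}
  have h1 : c * ∫ ω in A, X m ω ∂Q ≤ ∫ ω in A, X n ω ∂Q := by
    rw [← heq, ← MeasureTheory.integral_const_mul]
    refine setIntegral_mono_on ((hmart.integrable m).const_mul c).integrableOn
      hint.integrableOn hAmeas fun ω hω => ?_
    have := hmem ω hω
    simp only [Set.mem_Ioi] at this
    linarith
  rw [mdb_setint hmart hnonneg m hAmeas, mdb_setint hmart hnonneg n hAmeas,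
    ← ENNReal.ofReal_mul hc]
  exact ENNReal.ofReal_le_ofReal h1

lemma mdb_doob_min (hmart : Martingale X ℱ Q) (hnonneg : ∀ j ω, 0 ≤ X j ω)
    {m n : ℕ} (hmn : m ≤ n) {c : ℝ} (hc : 0 ≤ c) :
    (Q.withDensity fun ω => ENNReal.ofReal (X n ω))
        {ω | ∃ j ∈ Set.Icc m n, X j ω - c * X m ω ∈ Set.Iio 0}
      ≤ ENNReal.ofReal c *
      (Q.withDensity fun ω => ENNReal.ofReal (X m ω))
        {ω | ∃ j ∈ Set.Icc m n, X j ω - c * X m ω ∈ Set.Iio 0} := by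
  obtain ⟨hAmeas, τ, hmem, hint, heq⟩ := mdb_stop hmart hmn c measurableSet_Iio
  set A := {ω | ∃ j ∈ Set.Icc m n, X j ω - c * X m ω ∈ Set.Iio 0}
  have h1 : ∫ ω in A, X n ω ∂Q ≤ c * ∫ ω in A, X m ω ∂Q := by
    rw [← heq, ← MeasureTheory.integral_const_mul]
    refine setIntegral_mono_on hint.integrableOn
      ((hmart.integrable m).const_mul c).integrableOn hAmeas fun ω hω => ?_
    have := hmem ω hω
    simp only [Set.mem_Iio] at this
    linarith
  rw [mdb_setint hmart hnonneg m hAmeas, mdb_setint hmart hnonneg n hAmeas,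
    ← ENNReal.ofReal_mul hc]
  exact ENNReal.ofReal_le_ofReal h1

lemma mdb_logZ_int {ν μ : Measure Ω} [IsProbabilityMeasure ν] [IsProbabilityMeasure μ]
    (hac : μ ≪ ν)
    (hDD : (∫⁻ x, ENNReal.ofReal ((μ.rnDeriv ν x).toReal * Real.log (μ.rnDeriv ν x).toReal
      - (μ.rnDeriv ν x).toReal + 1) ∂ν) ≠ ∞)
    {Z : Ω → ℝ} (hZmeas : Measurable Z) (hZnn : ∀ ω, 0 ≤ Z ω)
    (hZ1 : ∀ᵐ ω ∂μ, 1 ≤ Z ω) (hZint : Integrable Z ν) :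
    Integrable (fun ω => Real.log (Z ω)) μ := by
  set r : Ω → ℝ := fun ω => (μ.rnDeriv ν ω).toReal with hr_def
  have hrmeas : Measurable r := (Measure.measurable_rnDeriv μ ν).ennreal_toReal
  have hrnn : ∀ ω, 0 ≤ r ω := fun ω => ENNReal.toReal_nonneg
  have hfin_ν : ∀ᵐ ω ∂ν, μ.rnDeriv ν ω ≠ ∞ := by
    filter_upwards [Measure.rnDeriv_lt_top μ ν] with ω h using h.ne
  have hρr : ∀ᵐ ω ∂ν, ENNReal.ofReal (r ω) = μ.rnDeriv ν ω := by
    filter_upwards [hfin_ν] with ω h using ENNReal.ofReal_toReal h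
  have hpos_μ : ∀ᵐ ω ∂μ, 0 < r ω := by
    filter_upwards [Measure.rnDeriv_pos hac, hac.ae_le (Measure.rnDeriv_lt_top μ ν)]
      with ω h1 h2 using ENNReal.toReal_pos h1.ne' h2.ne
  have hμ_eq : ν.withDensity (μ.rnDeriv ν) = μ := Measure.withDensity_rnDeriv_eq μ ν hac
  have hlogmeas : Measurable fun ω => ENNReal.ofReal (Real.log (r ω)) :=
    ENNReal.measurable_ofReal.comp (Real.measurable_log.comp hrmeas)
  have hZrmeas : Measurable fun ω => ENNReal.ofReal (Z ω / r ω) :=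
    ENNReal.measurable_ofReal.comp (hZmeas.div hrmeas)
  have h1 : ∀ᵐ ω ∂μ, ENNReal.ofReal (Real.log (Z ω))
      ≤ ENNReal.ofReal (Real.log (r ω)) + ENNReal.ofReal (Z ω / r ω) := by
    filter_upwards [hpos_μ, hZ1] with ω hr1 hZ1'
    have hZpos : (0:ℝ) < Z ω := lt_of_lt_of_le one_pos hZ1'
    have hsplit : Real.log (Z ω) = Real.log (r ω) + Real.log (Z ω / r ω) := by
      rw [Real.log_div hZpos.ne' hr1.ne']; ring
    calc ENNReal.ofReal (Real.log (Z ω))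
        ≤ ENNReal.ofReal (Real.log (r ω)) + ENNReal.ofReal (Real.log (Z ω / r ω)) := by
          rw [hsplit]; exact ENNReal.ofReal_add_le
      _ ≤ ENNReal.ofReal (Real.log (r ω)) + ENNReal.ofReal (Z ω / r ω) := by
          gcongr
          have := Real.log_le_sub_one_of_pos (div_pos hZpos hr1)
          linarith
  have bound1 : ∫⁻ ω, ENNReal.ofReal (Real.log (r ω)) ∂μ
      ≤ (∫⁻ x, ENNReal.ofReal ((μ.rnDeriv ν x).toReal * Real.log (μ.rnDeriv ν x).toReal
      - (μ.rnDeriv ν x).toReal + 1) ∂ν) + 1 := by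
    conv_lhs => rw [← hμ_eq]
    rw [lintegral_withDensity_eq_lintegral_mul _ (Measure.measurable_rnDeriv μ ν) hlogmeas]
    have hptwise : ∀ᵐ ω ∂ν, μ.rnDeriv ν ω * ENNReal.ofReal (Real.log (r ω))
        ≤ ENNReal.ofReal (r ω * Real.log (r ω) - r ω + 1) + μ.rnDeriv ν ω := by
      filter_upwards [hρr] with ω hρ
      rcases le_or_gt (Real.log (r ω)) 0 with h | h
      · simp [ENNReal.ofReal_eq_zero.mpr h]
      · rw [← hρ, ← ENNReal.ofReal_mul (hrnn ω)]
        calc ENNReal.ofReal (r ω * Real.log (r ω))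
            ≤ ENNReal.ofReal ((r ω * Real.log (r ω) - r ω + 1) + r ω) := by
              apply ENNReal.ofReal_le_ofReal; linarith
          _ ≤ ENNReal.ofReal (r ω * Real.log (r ω) - r ω + 1) + ENNReal.ofReal (r ω) :=
              ENNReal.ofReal_add_le
    calc ∫⁻ ω, μ.rnDeriv ν ω * ENNReal.ofReal (Real.log (r ω)) ∂ν
        ≤ ∫⁻ ω, (ENNReal.ofReal (r ω * Real.log (r ω) - r ω + 1) + μ.rnDeriv ν ω) ∂ν :=
          lintegral_mono_ae hptwise
      _ = (∫⁻ x, ENNReal.ofReal ((μ.rnDeriv ν x).toReal * Real.log (μ.rnDeriv ν x).toReal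
            - (μ.rnDeriv ν x).toReal + 1) ∂ν) + ∫⁻ ω, μ.rnDeriv ν ω ∂ν := by
          rw [lintegral_add_right _ (Measure.measurable_rnDeriv μ ν)]
      _ ≤ _ := by
          rw [Measure.lintegral_rnDeriv hac]
          simp
  have bound2 : ∫⁻ ω, ENNReal.ofReal (Z ω / r ω) ∂μ ≤ ENNReal.ofReal (∫ ω, Z ω ∂ν) := by
    conv_lhs => rw [← hμ_eq]
    rw [lintegral_withDensity_eq_lintegral_mul _ (Measure.measurable_rnDeriv μ ν) hZrmeas]
    have hptwise : ∀ᵐ ω ∂ν, μ.rnDeriv ν ω * ENNReal.ofReal (Z ω / r ω)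
        ≤ ENNReal.ofReal (Z ω) := by
      filter_upwards [hρr] with ω hρ
      rw [← hρ, ← ENNReal.ofReal_mul (hrnn ω)]
      apply ENNReal.ofReal_le_ofReal
      rcases eq_or_lt_of_le (hrnn ω) with h | h
      · rw [← h]; simpa using hZnn ω
      · rw [mul_div_cancel₀ _ h.ne']
    calc ∫⁻ ω, μ.rnDeriv ν ω * ENNReal.ofReal (Z ω / r ω) ∂ν
        ≤ ∫⁻ ω, ENNReal.ofReal (Z ω) ∂ν := lintegral_mono_ae hptwise
      _ = ENNReal.ofReal (∫ ω, Z ω ∂ν) :=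
          (ofReal_integral_eq_lintegral_ofReal hZint (Eventually.of_forall hZnn)).symm
  have hfin : ∫⁻ ω, ENNReal.ofReal (Real.log (Z ω)) ∂μ < ∞ := by
    calc ∫⁻ ω, ENNReal.ofReal (Real.log (Z ω)) ∂μ
        ≤ ∫⁻ ω, (ENNReal.ofReal (Real.log (r ω)) + ENNReal.ofReal (Z ω / r ω)) ∂μ :=
          lintegral_mono_ae h1
      _ = ∫⁻ ω, ENNReal.ofReal (Real.log (r ω)) ∂μ + ∫⁻ ω, ENNReal.ofReal (Z ω / r ω) ∂μ :=
          lintegral_add_left hlogmeas _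
      _ < ∞ := by
          apply ENNReal.add_lt_top.mpr
          constructor
          · exact lt_of_le_of_lt bound1 (by
              rw [lt_top_iff_ne_top]
              exact ENNReal.add_ne_top.mpr ⟨hDD, ENNReal.one_ne_top⟩)
          · exact lt_of_le_of_lt bound2 ENNReal.ofReal_lt_top
  refine ⟨(Real.measurable_log.comp hZmeas).aestronglyMeasurable, ?_⟩
  rw [hasFiniteIntegral_iff_ofReal ?_]
  · exact hfin
  · filter_upwards [hZ1] with ω h using Real.log_nonneg h

lemma mdb_gibbs {ν μ : Measure Ω} [IsProbabilityMeasure ν] [IsProbabilityMeasure μ]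
    (hac : μ ≪ ν)
    (hDD : (∫⁻ x, ENNReal.ofReal ((μ.rnDeriv ν x).toReal * Real.log (μ.rnDeriv ν x).toReal
      - (μ.rnDeriv ν x).toReal + 1) ∂ν) ≠ ∞)
    {Z : Ω → ℝ} (hZmeas : Measurable Z) (hZnn : ∀ ω, 0 ≤ Z ω)
    (hZpos : ∀ᵐ ω ∂μ, 0 < Z ω) (hZint : Integrable Z ν)
    (hlogZint : Integrable (fun ω => Real.log (Z ω)) μ) :
    0 < ∫ ω, Z ω ∂ν ∧
    ∫ ω, Real.log (Z ω) ∂μ ≤ (∫⁻ x, ENNReal.ofReal ((μ.rnDeriv ν x).toReal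
      * Real.log (μ.rnDeriv ν x).toReal - (μ.rnDeriv ν x).toReal + 1) ∂ν).toReal
      + Real.log (∫ ω, Z ω ∂ν) := by
  set DD := ∫⁻ x, ENNReal.ofReal ((μ.rnDeriv ν x).toReal * Real.log (μ.rnDeriv ν x).toReal
      - (μ.rnDeriv ν x).toReal + 1) ∂ν with hDD_def
  set r : Ω → ℝ := fun ω => (μ.rnDeriv ν ω).toReal with hr_def
  have hrmeas : Measurable r := (Measure.measurable_rnDeriv μ ν).ennreal_toReal
  have hrnn : ∀ ω, 0 ≤ r ω := fun ω => ENNReal.toReal_nonneg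
  have hpos_μ : ∀ᵐ ω ∂μ, 0 < r ω := by
    filter_upwards [Measure.rnDeriv_pos hac, hac.ae_le (Measure.rnDeriv_lt_top μ ν)]
      with ω h1 h2 using ENNReal.toReal_pos h1.ne' h2.ne
  -- ψ := r log r - r + 1 is integrable with integral DD.toReal
  have hψnn : ∀ ω, 0 ≤ r ω * Real.log (r ω) - r ω + 1 := fun ω => mdb_psi_nonneg (hrnn ω)
  have hψmeas : Measurable fun ω => r ω * Real.log (r ω) - r ω + 1 := by
    have := (hrmeas.mul (Real.measurable_log.comp hrmeas)).sub hrmeas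
    exact this.add_const 1
  have hψint : Integrable (fun ω => r ω * Real.log (r ω) - r ω + 1) ν := by
    refine ⟨hψmeas.aestronglyMeasurable, ?_⟩
    rw [hasFiniteIntegral_iff_ofReal (Eventually.of_forall hψnn)]
    exact lt_top_iff_ne_top.mpr hDD
  have hψeq : ∫ ω, (r ω * Real.log (r ω) - r ω + 1) ∂ν = DD.toReal := by
    rw [integral_eq_lintegral_of_nonneg_ae (Eventually.of_forall hψnn)
      hψmeas.aestronglyMeasurable]
  have hrint : Integrable r ν := Measure.integrable_toReal_rnDeriv
  have hrmean : ∫ ω, r ω ∂ν = 1 := by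
    rw [hr_def, Measure.integral_toReal_rnDeriv hac]
    simp
  have hrlogr_int : Integrable (fun ω => r ω * Real.log (r ω)) ν := by
    have : (fun ω => r ω * Real.log (r ω))
        = fun ω => (r ω * Real.log (r ω) - r ω + 1) + (r ω - 1) := by
      funext ω; ring
    rw [this]
    exact hψint.add (by exact hrint.sub (integrable_const (1:ℝ)))
  have hrlogr_eq : ∫ ω, r ω * Real.log (r ω) ∂ν = DD.toReal := by
    have : (fun ω => r ω * Real.log (r ω))
        = fun ω => (r ω * Real.log (r ω) - r ω + 1) + (r ω - 1) := by
      funext ω; ring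
    have h2 : Integrable (fun ω => r ω - 1) ν := by
      exact hrint.sub (integrable_const (1:ℝ))
    rw [this, integral_add hψint h2, hψeq]
    have h3 : ∫ ω, (r ω - 1) ∂ν = 0 := by
      rw [integral_sub hrint (integrable_const 1), hrmean]
      simp
    rw [h3]
    simp
  -- transfer to μ
  have hsmul_eq : (fun ω => (μ.rnDeriv ν ω).toReal • Real.log (r ω))
      = fun ω => r ω * Real.log (r ω) := by
    funext ω; rw [smul_eq_mul]
  have hlogr_int_μ : Integrable (fun ω => Real.log (r ω)) μ := by
    rw [← MeasureTheory.integrable_rnDeriv_smul_iff hac, hsmul_eq]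
    exact hrlogr_int
  have hlogr_mean_μ : ∫ ω, Real.log (r ω) ∂μ = DD.toReal := by
    rw [← MeasureTheory.integral_rnDeriv_smul hac (f := fun ω => Real.log (r ω)), hsmul_eq, hrlogr_eq]
  -- W := Z / r
  set W : Ω → ℝ := fun ω => Z ω / r ω with hW_def
  have hWmeas : Measurable W := hZmeas.div hrmeas
  have hWnn : ∀ ω, 0 ≤ W ω := fun ω => div_nonneg (hZnn ω) (hrnn ω)
  have hrW_le : ∀ ω, (μ.rnDeriv ν ω).toReal • W ω ≤ Z ω := by
    intro ω
    rw [smul_eq_mul]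
    rcases eq_or_lt_of_le (hrnn ω) with h | h
    · have h' : (μ.rnDeriv ν ω).toReal = 0 := h.symm
      rw [h', zero_mul]; exact hZnn ω
    · rw [hW_def]; rw [mul_div_cancel₀ _ h.ne']
  have hrW_int : Integrable (fun ω => (μ.rnDeriv ν ω).toReal • W ω) ν := by
    refine Integrable.mono hZint ((hrmeas.mul hWmeas).aestronglyMeasurable) ?_
    refine Eventually.of_forall fun ω => ?_
    have h1 : (0:ℝ) ≤ (μ.rnDeriv ν ω).toReal • W ω := by
      rw [smul_eq_mul]; exact mul_nonneg (hrnn ω) (hWnn ω)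
    rw [Real.norm_eq_abs, Real.norm_eq_abs, abs_of_nonneg h1, abs_of_nonneg (hZnn ω)]
    exact hrW_le ω
  have hWint_μ : Integrable W μ := (MeasureTheory.integrable_rnDeriv_smul_iff hac).mp hrW_int
  have hWc_le : ∫ ω, W ω ∂μ ≤ ∫ ω, Z ω ∂ν := by
    rw [← MeasureTheory.integral_rnDeriv_smul hac (f := W)]
    exact integral_mono hrW_int hZint hrW_le
  have hWpos : ∀ᵐ ω ∂μ, 0 < W ω := by
    filter_upwards [hpos_μ, hZpos] with ω h1 h2 using div_pos h2 h1
  set c := ∫ ω, W ω ∂μ with hc_def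
  have hc_pos : 0 < c := by
    rcases lt_or_eq_of_le (integral_nonneg (f := W) hWnn) with h | h
    · exact h
    · exfalso
      have h0 : W =ᵐ[μ] 0 := by
        rw [← integral_eq_zero_iff_of_nonneg_ae (Eventually.of_forall hWnn) hWint_μ]
        exact h.symm
      have : ∀ᵐ ω ∂μ, False := by
        filter_upwards [h0, hWpos] with ω h1 h2
        rw [h1] at h2; exact lt_irrefl 0 h2
      rw [ae_iff] at this
      simp only [not_false_eq_true, Set.setOf_true] at this
      exact (IsProbabilityMeasure.ne_zero μ) (Measure.measure_univ_eq_zero.mp this)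
  have hMpos : 0 < ∫ ω, Z ω ∂ν := lt_of_lt_of_le hc_pos hWc_le
  refine ⟨hMpos, ?_⟩
  -- log W ≤ W / c - 1 + log c pointwise ae
  have hlogW_int : Integrable (fun ω => Real.log (W ω)) μ := by
    have heq : (fun ω => Real.log (Z ω) - Real.log (r ω)) =ᵐ[μ] fun ω => Real.log (W ω) := by
      filter_upwards [hpos_μ, hZpos] with ω h1 h2
      rw [hW_def, Real.log_div h2.ne' h1.ne']
    exact (hlogZint.sub hlogr_int_μ).congr heq
  have hlogW_le : ∫ ω, Real.log (W ω) ∂μ ≤ Real.log c := by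
    have hptwise : ∀ᵐ ω ∂μ, Real.log (W ω) ≤ W ω / c - 1 + Real.log c := by
      filter_upwards [hWpos] with ω h
      have h1 : Real.log (W ω / c) ≤ W ω / c - 1 :=
        Real.log_le_sub_one_of_pos (div_pos h hc_pos)
      rw [Real.log_div h.ne' hc_pos.ne'] at h1
      linarith
    have i1 : Integrable (fun ω => W ω / c) μ := hWint_μ.div_const c
    have i2 : Integrable (fun ω => W ω / c - 1) μ := by
      exact i1.sub (integrable_const (1:ℝ))
    have hrhs_int : Integrable (fun ω => W ω / c - 1 + Real.log c) μ := by
      simpa using i2.add (integrable_const (Real.log c))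
    calc ∫ ω, Real.log (W ω) ∂μ ≤ ∫ ω, (W ω / c - 1 + Real.log c) ∂μ :=
          integral_mono_ae hlogW_int hrhs_int hptwise
      _ = Real.log c := by
          rw [integral_add i2 (integrable_const _), integral_sub i1 (integrable_const 1),
            integral_div, ← hc_def, div_self hc_pos.ne']
          simp
  have hsplit : ∫ ω, Real.log (Z ω) ∂μ
      = ∫ ω, Real.log (r ω) ∂μ + ∫ ω, Real.log (W ω) ∂μ := by
    rw [← integral_add hlogr_int_μ hlogW_int]
    apply integral_congr_ae
    filter_upwards [hpos_μ, hZpos] with ω h1 h2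
    rw [hW_def, Real.log_div h2.ne' h1.ne']
    ring
  rw [hsplit, hlogr_mean_μ]
  have : Real.log c ≤ Real.log (∫ ω, Z ω ∂ν) := Real.log_le_log hc_pos hWc_le
  linarith [hlogW_le]

lemma mdb_layercake_one {μ : Measure Ω} {f : Ω → ℝ} (hf_nn : 0 ≤ᵐ[μ] f) (hf : Measurable f) :
    ∫⁻ ω, ENNReal.ofReal (f ω) ∂μ = ∫⁻ t in Set.Ioi (0:ℝ), μ {a | t < f a} := by
  have h := lintegral_comp_eq_lintegral_meas_lt_mul μ hf_nn hf.aemeasurable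
    (g := fun _ => (1:ℝ)) (fun t _ => intervalIntegrable_const)
    (Eventually.of_forall fun t => zero_le_one)
  simp only [intervalIntegral.integral_const, smul_eq_mul, mul_one, sub_zero,
    ENNReal.ofReal_one] at h
  simpa using h

lemma mdb_layercake_exp {μ : Measure Ω} {f : Ω → ℝ} (hf_nn : 0 ≤ᵐ[μ] f) (hf : Measurable f) :
    ∫⁻ ω, ENNReal.ofReal (Real.exp (f ω) - 1) ∂μ
      = ∫⁻ t in Set.Ioi (0:ℝ), μ {a | t < f a} * ENNReal.ofReal (Real.exp t) := by
  have h := lintegral_comp_eq_lintegral_meas_lt_mul μ hf_nn hf.aemeasurable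
    (g := fun t => Real.exp t) (fun t _ => Real.continuous_exp.intervalIntegrable 0 t)
    (Eventually.of_forall fun t => (Real.exp_pos t).le)
  simp only [integral_exp, Real.exp_zero] at h
  exact h

lemma mdb_layercake_expneg {μ : Measure Ω} {f : Ω → ℝ} (hf_nn : 0 ≤ᵐ[μ] f) (hf : Measurable f) :
    ∫⁻ ω, ENNReal.ofReal (1 - Real.exp (-f ω)) ∂μ
      = ∫⁻ t in Set.Ioi (0:ℝ), μ {a | t < f a} * ENNReal.ofReal (Real.exp (-t)) := by
  have h := lintegral_comp_eq_lintegral_meas_lt_mul μ hf_nn hf.aemeasurable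
    (g := fun t => Real.exp (-t))
    (fun t _ => (Real.continuous_exp.comp continuous_neg).intervalIntegrable 0 t)
    (Eventually.of_forall fun t => (Real.exp_pos (-t)).le)
  have hiv : ∀ x : ℝ, ∫ t in (0:ℝ)..x, Real.exp (-t) = 1 - Real.exp (-x) := by
    intro x
    rw [intervalIntegral.integral_comp_neg (fun t => Real.exp t), integral_exp]
    simp
  simp only [hiv] at h
  exact h

lemma mdb_expneg_total : ∫⁻ t in Set.Ioi (0:ℝ), ENNReal.ofReal (Real.exp (-t)) = 1 := by
  have hInt : IntegrableOn (fun t : ℝ => Real.exp (-t)) (Set.Ioi 0) := by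
    have := exp_neg_integrableOn_Ioi 0 one_pos
    simpa using this
  rw [← ofReal_integral_eq_lintegral_ofReal hInt
    (Eventually.of_forall fun t => (Real.exp_pos (-t)).le), integral_exp_neg_Ioi_zero,
    ENNReal.ofReal_one]

end MDBaux

set_option maxHeartbeats 2000000 in
/-- For a non-negative martingale `(Xⱼ)` with `E[Xₙ] = 1` under a probability
measure `Q`, with `Pⱼ := Q.withDensity Xⱼ`, one has
`γ(E[max_{m ≤ j ≤ n} Xⱼ]) ≤ D(Pₙ‖Pₘ)` and `γ(E[min_{m ≤ j ≤ n} Xⱼ]) ≤ D(Pₙ‖Pₘ)`. -/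
theorem martingale_maximal_divergence_bound
    {Ω : Type*} [mΩ : MeasurableSpace Ω] (Q : Measure Ω) [IsProbabilityMeasure Q]
    (ℱ : Filtration ℕ mΩ) (X : ℕ → Ω → ℝ)
    (hmart : Martingale X ℱ Q)
    (hnonneg : ∀ j, ∀ ω, 0 ≤ X j ω)
    (m n : ℕ) (hm : 1 ≤ m) (hmn : m ≤ n)
    (hXn : ∫ ω, X n ω ∂Q = 1) :
    ENNReal.ofReal (gammaFn (∫ ω,
        (Finset.Icc m n).sup' (Finset.nonempty_Icc.mpr hmn) (fun j => X j ω) ∂Q))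
      ≤ infoDiv (Q.withDensity fun ω => ENNReal.ofReal (X n ω))
          (Q.withDensity fun ω => ENNReal.ofReal (X m ω)) ∧
    ENNReal.ofReal (gammaFn (∫ ω,
        (Finset.Icc m n).inf' (Finset.nonempty_Icc.mpr hmn) (fun j => X j ω) ∂Q))
      ≤ infoDiv (Q.withDensity fun ω => ENNReal.ofReal (X n ω))
          (Q.withDensity fun ω => ENNReal.ofReal (X m ω)) := by
  classical
  set ν := Q.withDensity fun ω => ENNReal.ofReal (X m ω) with hν_def
  set μ := Q.withDensity fun ω => ENNReal.ofReal (X n ω) with hμ_def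
  have hXmeas : ∀ j, Measurable (X j) := fun j => ((hmart.stronglyAdapted j).mono (ℱ.le j)).measurable
  have hne : (Finset.Icc m n).Nonempty := Finset.nonempty_Icc.mpr hmn
  have hm_mem : m ∈ Finset.Icc m n := Finset.mem_Icc.mpr ⟨le_refl m, hmn⟩
  set Xmax : Ω → ℝ :=
    fun ω => (Finset.Icc m n).sup' (Finset.nonempty_Icc.mpr hmn) (fun j => X j ω) with hXmax_def
  set Xmin : Ω → ℝ :=
    fun ω => (Finset.Icc m n).inf' (Finset.nonempty_Icc.mpr hmn) (fun j => X j ω) with hXmin_def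
  have hXmax_meas : Measurable Xmax := by
    have h := Finset.measurable_sup' (Finset.nonempty_Icc.mpr hmn) (fun j (_ : j ∈ Finset.Icc m n) => hXmeas j)
    have heq : Xmax = (Finset.Icc m n).sup' (Finset.nonempty_Icc.mpr hmn) (fun j => X j) := by
      funext ω; rw [Finset.sup'_apply]
    rw [heq]; exact h
  have hXmin_meas : Measurable Xmin := by
    have h : Measurable ((Finset.Icc m n).inf' (Finset.nonempty_Icc.mpr hmn) (fun j => X j)) :=
      Finset.inf'_induction (Finset.nonempty_Icc.mpr hmn) (fun j => X j)
        (fun _f hf _g hg => hf.inf hg) (fun j _ => hXmeas j)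
    have heq : Xmin = (Finset.Icc m n).inf' (Finset.nonempty_Icc.mpr hmn) (fun j => X j) := by
      funext ω; rw [Finset.inf'_apply]
    rw [heq]; exact h
  have hXmax_ge_m : ∀ ω, X m ω ≤ Xmax ω := fun ω => Finset.le_sup' (fun j => X j ω) hm_mem
  have hXmax_nonneg : ∀ ω, 0 ≤ Xmax ω := fun ω => le_trans (hnonneg m ω) (hXmax_ge_m ω)
  have hXmin_le_m : ∀ ω, Xmin ω ≤ X m ω := fun ω => Finset.inf'_le (fun j => X j ω) hm_mem
  have hXmin_nonneg : ∀ ω, 0 ≤ Xmin ω := fun ω =>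
    Finset.le_inf' (Finset.nonempty_Icc.mpr hmn) _ (fun j _ => hnonneg j ω)
  have hXmax_int : Integrable Xmax Q := by
    have hsum_int : Integrable (fun ω => ∑ j ∈ Finset.Icc m n, X j ω) Q :=
      integrable_finset_sum _ (fun j _ => hmart.integrable j)
    refine hsum_int.mono hXmax_meas.aestronglyMeasurable (Eventually.of_forall fun ω => ?_)
    rw [Real.norm_eq_abs, Real.norm_eq_abs, abs_of_nonneg (hXmax_nonneg ω),
      abs_of_nonneg (Finset.sum_nonneg fun j _ => hnonneg j ω)]
    exact Finset.sup'_le _ _ (fun j hj => Finset.single_le_sum (fun i _ => hnonneg i ω) hj)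
  have hXmin_int : Integrable Xmin Q := by
    refine (hmart.integrable m).mono hXmin_meas.aestronglyMeasurable
      (Eventually.of_forall fun ω => ?_)
    rw [Real.norm_eq_abs, Real.norm_eq_abs, abs_of_nonneg (hXmin_nonneg ω),
      abs_of_nonneg (hnonneg m ω)]
    exact hXmin_le_m ω
  have hXm1 : ∫ ω, X m ω ∂Q = 1 := by
    have h := hmart.setIntegral_eq hmn (MeasurableSet.univ (α := Ω))
    rw [setIntegral_univ, setIntegral_univ] at h
    rw [h, hXn]
  haveI hν_prob : IsProbabilityMeasure ν := by
    constructor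
    rw [hν_def, withDensity_apply _ MeasurableSet.univ, Measure.restrict_univ,
      ← ofReal_integral_eq_lintegral_ofReal (hmart.integrable m)
        (Eventually.of_forall fun ω => hnonneg m ω), hXm1, ENNReal.ofReal_one]
  haveI hμ_prob : IsProbabilityMeasure μ := by
    constructor
    rw [hμ_def, withDensity_apply _ MeasurableSet.univ, Measure.restrict_univ,
      ← ofReal_integral_eq_lintegral_ofReal (hmart.integrable n)
        (Eventually.of_forall fun ω => hnonneg n ω), hXn, ENNReal.ofReal_one]
  by_cases hac : μ ≪ ν
  swap
  · have hID : infoDiv μ ν = ∞ := by rw [infoDiv, if_neg hac]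
    rw [hID]
    exact ⟨le_top, le_top⟩
  set DD := ∫⁻ x, ENNReal.ofReal ((μ.rnDeriv ν x).toReal * Real.log (μ.rnDeriv ν x).toReal
      - (μ.rnDeriv ν x).toReal + 1) ∂ν with hDD_def
  have hID : infoDiv μ ν = DD := by rw [infoDiv, if_pos hac]
  rw [hID]
  by_cases hDDtop : DD = ∞
  · rw [hDDtop]; exact ⟨le_top, le_top⟩
  -- basic positivity facts
  have hXm0_ν : ν {ω | X m ω ≤ 0} = 0 := by
    have hms : MeasurableSet {ω | X m ω ≤ 0} := (hXmeas m) measurableSet_Iic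
    rw [hν_def, withDensity_apply _ hms]
    calc ∫⁻ ω in {ω | X m ω ≤ 0}, ENNReal.ofReal (X m ω) ∂Q
        = ∫⁻ _ in {ω | X m ω ≤ 0}, (0:ℝ≥0∞) ∂Q :=
          setLIntegral_congr_fun hms (fun ω (hω : X m ω ≤ 0) =>
            ENNReal.ofReal_eq_zero.mpr hω)
      _ = 0 := by simp
  have hXm_pos_ν : ∀ᵐ ω ∂ν, 0 < X m ω := by
    rw [ae_iff]
    convert hXm0_ν using 2
    ext ω; simp [not_lt]
  have hXm_pos_μ : ∀ᵐ ω ∂μ, 0 < X m ω := by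
    rw [ae_iff]
    have := hac hXm0_ν
    convert this using 2
    ext ω; simp [not_lt]
  -- absorption
  have habs : ∀ᵐ ω ∂Q, ∀ j ∈ Finset.Icc m n, (X m ω = 0 → X j ω = 0) := by
    rw [ae_all_iff]
    intro j
    by_cases hj : j ∈ Finset.Icc m n
    · have hmj : m ≤ j := (Finset.mem_Icc.mp hj).1
      filter_upwards [mdb_absorb hmart hnonneg hmj] with ω h _ h0 using h h0
    · filter_upwards with ω h using absurd h hj
  have habs_max : ∀ᵐ ω ∂Q, X m ω = 0 → Xmax ω = 0 := by
    filter_upwards [habs] with ω h h0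
    refine le_antisymm (Finset.sup'_le _ _ fun j hj => le_of_eq (h j hj h0)) (hXmax_nonneg ω)
  have habs_n : ∀ᵐ ω ∂Q, ∀ j ∈ Finset.Icc m n, (X j ω = 0 → X n ω = 0) := by
    rw [ae_all_iff]
    intro j
    by_cases hj : j ∈ Finset.Icc m n
    · have hjn : j ≤ n := (Finset.mem_Icc.mp hj).2
      filter_upwards [mdb_absorb hmart hnonneg hjn] with ω h _ h0 using h h0
    · filter_upwards with ω h using absurd h hj
  -- ===== MAX PART =====
  set M := ∫ ω, Xmax ω ∂Q with hM_def
  set Z : Ω → ℝ := fun ω => Xmax ω / X m ω with hZ_def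
  have hZmeas : Measurable Z := hXmax_meas.div (hXmeas m)
  have hZnn : ∀ ω, 0 ≤ Z ω := fun ω => div_nonneg (hXmax_nonneg ω) (hnonneg m ω)
  have hZ1_ν : ∀ᵐ ω ∂ν, 1 ≤ Z ω := by
    filter_upwards [hXm_pos_ν] with ω h using (one_le_div h).mpr (hXmax_ge_m ω)
  have hZ1_μ : ∀ᵐ ω ∂μ, 1 ≤ Z ω := by
    filter_upwards [hXm_pos_μ] with ω h using (one_le_div h).mpr (hXmax_ge_m ω)
  have hXmZ_ae : (fun ω => X m ω * Z ω) =ᵐ[Q] Xmax := by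
    filter_upwards [habs_max] with ω h
    rcases eq_or_lt_of_le (hnonneg m ω) with h0 | h0
    · show X m ω * Z ω = Xmax ω
      rw [← h0, zero_mul]; exact (h h0.symm).symm
    · show X m ω * (Xmax ω / X m ω) = Xmax ω
      rw [mul_comm]; exact div_mul_cancel₀ _ h0.ne'
  have hνnn : ν = Q.withDensity (fun ω => ((X m ω).toNNReal : ℝ≥0∞)) := rfl
  have hZint_ν : Integrable Z ν := by
    rw [hνnn, integrable_withDensity_iff_integrable_smul ((hXmeas m).real_toNNReal)]
    refine hXmax_int.congr ?_
    filter_upwards [hXmZ_ae] with ω h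
    rw [NNReal.smul_def, Real.coe_toNNReal _ (hnonneg m ω)]
    exact h.symm
  have hZmean : ∫ ω, Z ω ∂ν = M := by
    rw [hνnn, integral_withDensity_eq_integral_smul ((hXmeas m).real_toNNReal), hM_def]
    apply integral_congr_ae
    filter_upwards [hXmZ_ae] with ω h
    rw [NNReal.smul_def, Real.coe_toNNReal _ (hnonneg m ω)]
    exact h
  have hM1 : 1 ≤ M := by
    rw [hM_def, ← hXm1]
    exact integral_mono (hmart.integrable m) hXmax_int hXmax_ge_m
  have hlogZ_int : Integrable (fun ω => Real.log (Z ω)) μ :=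
    mdb_logZ_int hac hDDtop hZmeas hZnn hZ1_μ hZint_ν
  have hZpos_μ : ∀ᵐ ω ∂μ, 0 < Z ω := hZ1_μ.mono fun ω h => lt_of_lt_of_le one_pos h
  set f := fun ω => Real.log (Z ω) with hf_def
  have hf_meas : Measurable f := Real.measurable_log.comp hZmeas
  have hf_nn_μ : 0 ≤ᵐ[μ] f := hZ1_μ.mono fun ω h => Real.log_nonneg h
  have hf_nn_ν : 0 ≤ᵐ[ν] f := hZ1_ν.mono fun ω h => Real.log_nonneg h
  have hdoob : ∀ t ∈ Set.Ioi (0:ℝ),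
      ν {a | t < f a} * ENNReal.ofReal (Real.exp t) ≤ μ {a | t < f a} := by
    intro t ht
    set c := Real.exp t with hc_def
    have hiff : ∀ ω, 0 < X m ω →
        (t < f ω ↔ ω ∈ {ω | ∃ j ∈ Set.Icc m n, X j ω - c * X m ω ∈ Set.Ioi (0:ℝ)}) := by
      intro ω hω
      have hZpos : 0 < Z ω := lt_of_lt_of_le one_pos ((one_le_div hω).mpr (hXmax_ge_m ω))
      have h1 : t < f ω ↔ c * X m ω < Xmax ω := by
        rw [show f ω = Real.log (Z ω) from rfl, Real.lt_log_iff_exp_lt hZpos,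
          show Z ω = Xmax ω / X m ω from rfl, lt_div_iff₀ hω, hc_def, mul_comm]
      have h2 : c * X m ω < Xmax ω
          ↔ ω ∈ {ω | ∃ j ∈ Set.Icc m n, X j ω - c * X m ω ∈ Set.Ioi (0:ℝ)} := by
        rw [show Xmax ω
          = (Finset.Icc m n).sup' (Finset.nonempty_Icc.mpr hmn) (fun j => X j ω) from rfl,
          Finset.lt_sup'_iff]
        constructor
        · rintro ⟨j, hj, hlt⟩
          obtain ⟨hj1, hj2⟩ := Finset.mem_Icc.mp hj
          exact ⟨j, Set.mem_Icc.mpr ⟨hj1, hj2⟩, Set.mem_Ioi.mpr (by linarith)⟩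
        · rintro ⟨j, hj, hlt⟩
          obtain ⟨hj1, hj2⟩ := Set.mem_Icc.mp hj
          rw [Set.mem_Ioi] at hlt
          exact ⟨j, Finset.mem_Icc.mpr ⟨hj1, hj2⟩, by linarith⟩
      rw [h1, h2]
    have hsetν : {a | t < f a}
        =ᵐ[ν] {ω | ∃ j ∈ Set.Icc m n, X j ω - c * X m ω ∈ Set.Ioi (0:ℝ)} := by
      rw [Filter.eventuallyEq_set]
      filter_upwards [hXm_pos_ν] with ω h using hiff ω h
    have hsetμ : {a | t < f a}
        =ᵐ[μ] {ω | ∃ j ∈ Set.Icc m n, X j ω - c * X m ω ∈ Set.Ioi (0:ℝ)} := by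
      rw [Filter.eventuallyEq_set]
      filter_upwards [hXm_pos_μ] with ω h using hiff ω h
    rw [measure_congr hsetν, measure_congr hsetμ, mul_comm]
    exact mdb_doob_max hmart hnonneg hmn (Real.exp_pos t).le
  have hZm1_int : Integrable (fun ω => Z ω - 1) ν := by
    exact hZint_ν.sub (integrable_const (1:ℝ))
  have hintZm1 : ∫ ω, (Z ω - 1) ∂ν = M - 1 := by
    rw [integral_sub hZint_ν (integrable_const 1), hZmean]
    simp
  have hmeas_t : Measurable fun t : ℝ => μ {a | t < f a} := by
    have hanti : Antitone fun t : ℝ => μ {a | t < f a} := fun s t hst =>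
      measure_mono (fun a ha => lt_of_le_of_lt hst ha)
    exact hanti.measurable
  have hchain : ENNReal.ofReal (M - 1) ≤ ∫⁻ ω, ENNReal.ofReal (f ω) ∂μ := by
    calc ENNReal.ofReal (M - 1) = ∫⁻ ω, ENNReal.ofReal (Z ω - 1) ∂ν := by
          rw [← hintZm1]
          exact ofReal_integral_eq_lintegral_ofReal hZm1_int
            (hZ1_ν.mono fun ω h => by show (0:ℝ) ≤ Z ω - 1; linarith)
      _ = ∫⁻ ω, ENNReal.ofReal (Real.exp (f ω) - 1) ∂ν := by
          apply lintegral_congr_ae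
          filter_upwards [hZ1_ν] with ω h
          rw [show f ω = Real.log (Z ω) from rfl, Real.exp_log (lt_of_lt_of_le one_pos h)]
      _ = ∫⁻ t in Set.Ioi 0, ν {a | t < f a} * ENNReal.ofReal (Real.exp t) :=
          mdb_layercake_exp hf_nn_ν hf_meas
      _ ≤ ∫⁻ t in Set.Ioi 0, μ {a | t < f a} := setLIntegral_mono hmeas_t hdoob
      _ = ∫⁻ ω, ENNReal.ofReal (f ω) ∂μ := (mdb_layercake_one hf_nn_μ hf_meas).symm
  have ha_nn : 0 ≤ ∫ ω, f ω ∂μ := integral_nonneg_of_ae hf_nn_μ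
  have hMa : M - 1 ≤ ∫ ω, f ω ∂μ := by
    rw [← ENNReal.ofReal_le_ofReal_iff ha_nn,
      ofReal_integral_eq_lintegral_ofReal hlogZ_int hf_nn_μ]
    exact hchain
  obtain ⟨hMpos, hgibbs⟩ := mdb_gibbs hac hDDtop hZmeas hZnn hZpos_μ hZint_ν hlogZ_int
  rw [hZmean] at hMpos hgibbs
  have hmax_real : gammaFn M ≤ DD.toReal := by
    simp only [gammaFn]
    linarith [hMa, hgibbs]
  have hmax : ENNReal.ofReal (gammaFn M) ≤ DD :=
    calc ENNReal.ofReal (gammaFn M) ≤ ENNReal.ofReal DD.toReal :=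
          ENNReal.ofReal_le_ofReal hmax_real
      _ = DD := ENNReal.ofReal_toReal hDDtop
  -- ===== MIN PART =====
  set mm := ∫ ω, Xmin ω ∂Q with hmm_def
  set Zm : Ω → ℝ := fun ω => Xmin ω / X m ω with hZm_def
  have hZm_meas : Measurable Zm := hXmin_meas.div (hXmeas m)
  have hZmnn : ∀ ω, 0 ≤ Zm ω := fun ω => div_nonneg (hXmin_nonneg ω) (hnonneg m ω)
  have hZm_le1 : ∀ ω, Zm ω ≤ 1 := by
    intro ω
    rcases eq_or_lt_of_le (hnonneg m ω) with h0 | h0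
    · show Xmin ω / X m ω ≤ 1
      rw [← h0]; simp
    · exact (div_le_one h0).mpr (hXmin_le_m ω)
  have hXmZm : ∀ ω, X m ω * Zm ω = Xmin ω := by
    intro ω
    rcases eq_or_lt_of_le (hnonneg m ω) with h0 | h0
    · have hmin0 : Xmin ω = 0 :=
        le_antisymm ((hXmin_le_m ω).trans h0.symm.le) (hXmin_nonneg ω)
      show X m ω * (Xmin ω / X m ω) = Xmin ω
      rw [← h0, zero_mul, hmin0]
    · show X m ω * (Xmin ω / X m ω) = Xmin ω
      rw [mul_comm]; exact div_mul_cancel₀ _ h0.ne'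
  have hZmint_ν : Integrable Zm ν := by
    rw [hνnn, integrable_withDensity_iff_integrable_smul ((hXmeas m).real_toNNReal)]
    refine hXmin_int.congr ?_
    filter_upwards with ω
    rw [NNReal.smul_def, Real.coe_toNNReal _ (hnonneg m ω)]
    exact (hXmZm ω).symm
  have hZm_mean : ∫ ω, Zm ω ∂ν = mm := by
    rw [hνnn, integral_withDensity_eq_integral_smul ((hXmeas m).real_toNNReal), hmm_def]
    apply integral_congr_ae
    filter_upwards with ω
    rw [NNReal.smul_def, Real.coe_toNNReal _ (hnonneg m ω)]
    exact hXmZm ω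
  have hmm_le1 : mm ≤ 1 := by
    rw [hmm_def, ← hXm1]
    exact integral_mono hXmin_int (hmart.integrable m) hXmin_le_m
  have hXmin0_μ : μ {ω | Xmin ω ≤ 0} = 0 := by
    have hms : MeasurableSet {ω | Xmin ω ≤ 0} := hXmin_meas measurableSet_Iic
    rw [hμ_def, withDensity_apply _ hms]
    have hae : ∀ᵐ ω ∂Q, ω ∈ {ω | Xmin ω ≤ 0} → ENNReal.ofReal (X n ω) = 0 := by
      filter_upwards [habs_n] with ω h hω
      have hmin0 : Xmin ω = 0 := le_antisymm hω (hXmin_nonneg ω)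
      obtain ⟨j, hj, hjeq⟩ :=
        Finset.exists_mem_eq_inf' (Finset.nonempty_Icc.mpr hmn) (fun j => X j ω)
      have hXj : X j ω = 0 := by
        have : Xmin ω = X j ω := hjeq
        rw [← this]; exact hmin0
      rw [ENNReal.ofReal_eq_zero]
      exact le_of_eq (h j hj hXj)
    calc ∫⁻ ω in {ω | Xmin ω ≤ 0}, ENNReal.ofReal (X n ω) ∂Q
        = ∫⁻ _ in {ω | Xmin ω ≤ 0}, (0:ℝ≥0∞) ∂Q := setLIntegral_congr_fun_ae hms hae
      _ = 0 := by simp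
  have hXmin_pos_μ : ∀ᵐ ω ∂μ, 0 < Xmin ω := by
    rw [ae_iff]
    convert hXmin0_μ using 2
    ext ω; simp [not_lt]
  have hZm_pos_μ : ∀ᵐ ω ∂μ, 0 < Zm ω := by
    filter_upwards [hXm_pos_μ, hXmin_pos_μ] with ω h1 h2 using div_pos h2 h1
  set fm := fun ω => -Real.log (Zm ω) with hfm_def
  have hfm_meas : Measurable fm := (Real.measurable_log.comp hZm_meas).neg
  have hfm_nn : ∀ ω, 0 ≤ fm ω := fun ω =>
    neg_nonneg.mpr (Real.log_nonpos (hZmnn ω) (hZm_le1 ω))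
  set S0 := {ω | Xmin ω = 0} with hS0_def
  have hS0_meas : MeasurableSet S0 := hXmin_meas (measurableSet_singleton 0)
  have hZm_eq0 : ∀ ω, Xmin ω = 0 → Zm ω = 0 := fun ω h => by
    show Xmin ω / X m ω = 0
    rw [h, zero_div]
  have hpt : ∀ ω, ENNReal.ofReal (1 - Zm ω)
      = ENNReal.ofReal (1 - Real.exp (-(fm ω))) + S0.indicator (fun _ => (1:ℝ≥0∞)) ω := by
    intro ω
    rcases eq_or_lt_of_le (hXmin_nonneg ω) with h0 | h0
    · have hz : Zm ω = 0 := hZm_eq0 ω h0.symm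
      have hfm0 : fm ω = 0 := by
        rw [show fm ω = -Real.log (Zm ω) from rfl, hz, Real.log_zero, neg_zero]
      rw [hz, hfm0, Set.indicator_of_mem (show ω ∈ S0 from h0.symm)]
      simp [Real.exp_zero]
    · have hxm : 0 < X m ω := lt_of_lt_of_le h0 (hXmin_le_m ω)
      have hz : 0 < Zm ω := div_pos h0 hxm
      have hexp : Real.exp (-(fm ω)) = Zm ω := by
        rw [show fm ω = -Real.log (Zm ω) from rfl, neg_neg, Real.exp_log hz]
      rw [hexp, Set.indicator_of_notMem (show ω ∉ S0 from fun hc => h0.ne' hc)]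
      simp
  have h1mZm_int : Integrable (fun ω => 1 - Zm ω) ν := by
    exact (integrable_const (1:ℝ)).sub hZmint_ν
  have hint1mZm : ∫ ω, (1 - Zm ω) ∂ν = 1 - mm := by
    rw [integral_sub (integrable_const 1) hZmint_ν, hZm_mean]
    simp
  have hdoobm : ∀ t ∈ Set.Ioi (0:ℝ), μ {a | t < fm a}
      ≤ (ν {a | t < fm a} + ν S0) * ENNReal.ofReal (Real.exp (-t)) := by
    intro t ht
    set c := Real.exp (-t) with hc_def
    have hcpos : 0 < c := Real.exp_pos _
    set B := {ω | ∃ j ∈ Set.Icc m n, X j ω - c * X m ω ∈ Set.Iio (0:ℝ)} with hB_def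
    have hBiff : ∀ ω, 0 < X m ω → 0 < Xmin ω → (t < fm ω ↔ ω ∈ B) := by
      intro ω h1 h2
      have hz : 0 < Zm ω := div_pos h2 h1
      have e1 : t < fm ω ↔ Real.log (Zm ω) < -t := by
        rw [show fm ω = -Real.log (Zm ω) from rfl]
        constructor <;> intro <;> linarith
      have e2 : Real.log (Zm ω) < -t ↔ Zm ω < c := by
        rw [Real.log_lt_iff_lt_exp hz, hc_def]
      have e3 : Zm ω < c ↔ Xmin ω < c * X m ω := by
        rw [show Zm ω = Xmin ω / X m ω from rfl, div_lt_iff₀ h1, mul_comm]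
      have e4 : Xmin ω < c * X m ω ↔ ω ∈ B := by
        rw [hB_def]
        rw [show Xmin ω
          = (Finset.Icc m n).inf' (Finset.nonempty_Icc.mpr hmn) (fun j => X j ω) from rfl,
          Finset.inf'_lt_iff]
        constructor
        · rintro ⟨j, hj, hlt⟩
          obtain ⟨hj1, hj2⟩ := Finset.mem_Icc.mp hj
          exact ⟨j, Set.mem_Icc.mpr ⟨hj1, hj2⟩, Set.mem_Iio.mpr (by linarith)⟩
        · rintro ⟨j, hj, hlt⟩
          obtain ⟨hj1, hj2⟩ := Set.mem_Icc.mp hj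
          rw [Set.mem_Iio] at hlt
          exact ⟨j, Finset.mem_Icc.mpr ⟨hj1, hj2⟩, by linarith⟩
      rw [e1, e2, e3, e4]
    have hsetμ : {a | t < fm a} =ᵐ[μ] B := by
      rw [Filter.eventuallyEq_set]
      filter_upwards [hXm_pos_μ, hXmin_pos_μ] with ω h1 h2 using hBiff ω h1 h2
    have hsubν : ν B ≤ ν ({a | t < fm a} ∪ S0) := by
      have hnull : ν (B \ ({a | t < fm a} ∪ S0)) = 0 := by
        apply measure_mono_null ?_ hXm0_ν
        rintro ω ⟨hB, hnt⟩
        by_contra hx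
        simp only [Set.mem_setOf_eq, not_le] at hx
        rcases eq_or_lt_of_le (hXmin_nonneg ω) with h0 | h0
        · exact hnt (Or.inr h0.symm)
        · exact hnt (Or.inl ((hBiff ω hx h0).mpr hB))
      calc ν B ≤ ν (B ∩ ({a | t < fm a} ∪ S0)) + ν (B \ ({a | t < fm a} ∪ S0)) :=
            measure_le_inter_add_diff ν B _
        _ = ν (B ∩ ({a | t < fm a} ∪ S0)) := by rw [hnull, add_zero]
        _ ≤ ν ({a | t < fm a} ∪ S0) := measure_mono Set.inter_subset_right
    calc μ {a | t < fm a} = μ B := measure_congr hsetμ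
      _ ≤ ENNReal.ofReal c * ν B := mdb_doob_min hmart hnonneg hmn hcpos.le
      _ ≤ ENNReal.ofReal c * (ν {a | t < fm a} + ν S0) := by
          gcongr
          exact hsubν.trans (measure_union_le _ _)
      _ = (ν {a | t < fm a} + ν S0) * ENNReal.ofReal c := mul_comm _ _
  have hmeasm_t : Measurable fun t : ℝ => ν {a | t < fm a} := by
    have hanti : Antitone fun t : ℝ => ν {a | t < fm a} := fun s t hst =>
      measure_mono (fun a ha => lt_of_le_of_lt hst ha)
    exact hanti.measurable
  have hchainm : ∫⁻ ω, ENNReal.ofReal (fm ω) ∂μ ≤ ENNReal.ofReal (1 - mm) := by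
    have hstep : ∫⁻ ω, ENNReal.ofReal (1 - Zm ω) ∂ν
        = ∫⁻ ω, ENNReal.ofReal (1 - Real.exp (-(fm ω))) ∂ν + ν S0 := by
      rw [lintegral_congr hpt, lintegral_add_right _ (measurable_const.indicator hS0_meas)]
      congr 1
      rw [lintegral_indicator_const hS0_meas, one_mul]
    calc ∫⁻ ω, ENNReal.ofReal (fm ω) ∂μ
        = ∫⁻ t in Set.Ioi 0, μ {a | t < fm a} :=
          mdb_layercake_one (Eventually.of_forall hfm_nn) hfm_meas
      _ ≤ ∫⁻ t in Set.Ioi 0, (ν {a | t < fm a} + ν S0) * ENNReal.ofReal (Real.exp (-t)) :=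
          setLIntegral_mono ((hmeasm_t.add measurable_const).mul
            ((Real.measurable_exp.comp measurable_neg).ennreal_ofReal)) hdoobm
      _ = (∫⁻ t in Set.Ioi 0, ν {a | t < fm a} * ENNReal.ofReal (Real.exp (-t)))
          + ν S0 * ∫⁻ t in Set.Ioi 0, ENNReal.ofReal (Real.exp (-t)) := by
          have hexpmeas : Measurable fun t : ℝ => ENNReal.ofReal (Real.exp (-t)) :=
            (Real.measurable_exp.comp measurable_neg).ennreal_ofReal
          simp_rw [add_mul]
          rw [lintegral_add_left (f := fun t : ℝ => ν {a | t < fm a} * ENNReal.ofReal (Real.exp (-t)))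
            (hmeasm_t.mul hexpmeas), lintegral_const_mul _ hexpmeas]
      _ = ∫⁻ ω, ENNReal.ofReal (1 - Real.exp (-(fm ω))) ∂ν + ν S0 := by
          rw [← mdb_layercake_expneg (Eventually.of_forall hfm_nn) hfm_meas, mdb_expneg_total,
            mul_one]
      _ = ∫⁻ ω, ENNReal.ofReal (1 - Zm ω) ∂ν := hstep.symm
      _ = ENNReal.ofReal (1 - mm) := by
          rw [← hint1mZm]
          exact (ofReal_integral_eq_lintegral_ofReal h1mZm_int
            (Eventually.of_forall fun ω => by
              show (0:ℝ) ≤ 1 - Zm ω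
              have := hZm_le1 ω; linarith)).symm
  have hfm_int : Integrable fm μ :=
    ⟨hfm_meas.aestronglyMeasurable, (hasFiniteIntegral_iff_ofReal
      (Eventually.of_forall hfm_nn)).mpr (lt_of_le_of_lt hchainm ENNReal.ofReal_lt_top)⟩
  have ham : ∫ ω, fm ω ∂μ ≤ 1 - mm := by
    rw [← ENNReal.ofReal_le_ofReal_iff (by linarith : (0:ℝ) ≤ 1 - mm),
      ofReal_integral_eq_lintegral_ofReal hfm_int (Eventually.of_forall hfm_nn)]
    exact hchainm
  have hlogZm_int : Integrable (fun ω => Real.log (Zm ω)) μ := by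
    have heq : (fun ω => Real.log (Zm ω)) = fun ω => -(fm ω) := by
      funext ω; simp [hfm_def]
    rw [heq]; exact hfm_int.neg
  have hlogZm_eq : ∫ ω, Real.log (Zm ω) ∂μ = -∫ ω, fm ω ∂μ := by
    rw [← integral_neg]
    apply integral_congr_ae
    filter_upwards with ω
    simp [hfm_def]
  obtain ⟨hmmpos, hgibbsm⟩ := mdb_gibbs hac hDDtop hZm_meas hZmnn hZm_pos_μ hZmint_ν hlogZm_int
  rw [hZm_mean] at hmmpos hgibbsm
  rw [hlogZm_eq] at hgibbsm
  have hmin_real : gammaFn mm ≤ DD.toReal := by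
    simp only [gammaFn]
    linarith [ham, hgibbsm]
  have hmin : ENNReal.ofReal (gammaFn mm) ≤ DD :=
    calc ENNReal.ofReal (gammaFn mm) ≤ ENNReal.ofReal DD.toReal :=
          ENNReal.ofReal_le_ofReal hmin_real
      _ = DD := ENNReal.ofReal_toReal hDDtop
  exact ⟨hmax, hmin⟩
end
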